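/- arXiv:2108.02677 — 2 statements merged into one kernel-verified Lean document; each statement's English description precedes it below -/
import Mathlib

section
/- The theory M + Δ0^P-WDC_ω proves Σ1^P-Foundation: in any model of M satisfying the Δ0^P weak dependent choices scheme for ω-sequences, every nonempty Σ1^P-definable class (with parameters) has an ∈-least element. -/
universe u

/-- de Bruijn-style formulas of the language of set theory, with primitive
bounded quantifiers (`∈`-bounded and `⊆`-bounded) and unbounded quantifiers.
`SF n` is the type of formulas with (at most) `n` free variables. -/
inductive SF : ℕ → Type
  | mem {n} (i j : Fin n) : SF n
  | eq {n} (i j : Fin n) : SF n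
  | not {n} (φ : SF n) : SF n
  | and {n} (φ ψ : SF n) : SF n
  | or {n} (φ ψ : SF n) : SF n
  | bexMem {n} (i : Fin n) (φ : SF (n + 1)) : SF n
  | ballMem {n} (i : Fin n) (φ : SF (n + 1)) : SF n
  | bexSub {n} (i : Fin n) (φ : SF (n + 1)) : SF n
  | ballSub {n} (i : Fin n) (φ : SF (n + 1)) : SF n
  | ex {n} (φ : SF (n + 1)) : SF n
  | all {n} (φ : SF (n + 1)) : SF n

variable {X : Type u}

/-- `a ⊆ b` in the structure `⟨X, E⟩`. -/
def SubE (E : X → X → Prop) (a b : X) : Prop := ∀ z, E z a → E z b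

/-- Satisfaction of a formula in the structure `⟨X, E⟩` under a valuation. -/
def SF.Eval (E : X → X → Prop) : {n : ℕ} → SF n → (Fin n → X) → Prop
  | _, .mem i j, v => E (v i) (v j)
  | _, .eq i j, v => v i = v j
  | _, .not φ, v => ¬ φ.Eval E v
  | _, .and φ ψ, v => φ.Eval E v ∧ ψ.Eval E v
  | _, .or φ ψ, v => φ.Eval E v ∨ ψ.Eval E v
  | _, .bexMem i φ, v => ∃ x, E x (v i) ∧ φ.Eval E (Fin.snoc v x)
  | _, .ballMem i φ, v => ∀ x, E x (v i) → φ.Eval E (Fin.snoc v x)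
  | _, .bexSub i φ, v => ∃ x, SubE E x (v i) ∧ φ.Eval E (Fin.snoc v x)
  | _, .ballSub i φ, v => ∀ x, SubE E x (v i) → φ.Eval E (Fin.snoc v x)
  | _, .ex φ, v => ∃ x, φ.Eval E (Fin.snoc v x)
  | _, .all φ, v => ∀ x, φ.Eval E (Fin.snoc v x)

/-- `Δ₀` formulas: only `∈`-bounded quantifiers. -/
def SF.IsDelta0 : {n : ℕ} → SF n → Prop
  | _, .mem _ _ => True
  | _, .eq _ _ => True
  | _, .not φ => φ.IsDelta0
  | _, .and φ ψ => φ.IsDelta0 ∧ ψ.IsDelta0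
  | _, .or φ ψ => φ.IsDelta0 ∧ ψ.IsDelta0
  | _, .bexMem _ φ => φ.IsDelta0
  | _, .ballMem _ φ => φ.IsDelta0
  | _, .bexSub _ _ => False
  | _, .ballSub _ _ => False
  | _, .ex _ => False
  | _, .all _ => False

/-- Takahashi's class `Δ₀^𝒫`: only `∈`-bounded and `⊆`-bounded quantifiers. -/
def SF.IsDelta0P : {n : ℕ} → SF n → Prop
  | _, .mem _ _ => True
  | _, .eq _ _ => True
  | _, .not φ => φ.IsDelta0P
  | _, .and φ ψ => φ.IsDelta0P ∧ ψ.IsDelta0P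
  | _, .or φ ψ => φ.IsDelta0P ∧ ψ.IsDelta0P
  | _, .bexMem _ φ => φ.IsDelta0P
  | _, .ballMem _ φ => φ.IsDelta0P
  | _, .bexSub _ φ => φ.IsDelta0P
  | _, .ballSub _ φ => φ.IsDelta0P
  | _, .ex _ => False
  | _, .all _ => False

def Delta0C : ∀ n, SF n → Prop := fun _ φ => φ.IsDelta0
def Delta0PC : ∀ n, SF n → Prop := fun _ φ => φ.IsDelta0P
def Sigma1C : ∀ n, SF n → Prop := fun _ φ => ∃ ψ, ψ.IsDelta0 ∧ φ = SF.ex ψ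
def Pi1C : ∀ n, SF n → Prop := fun _ φ => ∃ ψ, ψ.IsDelta0 ∧ φ = SF.all ψ
def Sigma1PC : ∀ n, SF n → Prop := fun _ φ => ∃ ψ, ψ.IsDelta0P ∧ φ = SF.ex ψ
def Pi1PC : ∀ n, SF n → Prop := fun _ φ => ∃ ψ, ψ.IsDelta0P ∧ φ = SF.all ψ
def FullC : ∀ n, SF n → Prop := fun _ _ => True

/-- A Gödel numbering of formulas. -/
def SF.encode : {n : ℕ} → SF n → ℕ
  | _, .mem i j => Nat.pair 0 (Nat.pair i.val j.val)
  | _, .eq i j => Nat.pair 1 (Nat.pair i.val j.val)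
  | _, .not φ => Nat.pair 2 φ.encode
  | _, .and φ ψ => Nat.pair 3 (Nat.pair φ.encode ψ.encode)
  | _, .or φ ψ => Nat.pair 4 (Nat.pair φ.encode ψ.encode)
  | _, .bexMem i φ => Nat.pair 5 (Nat.pair i.val φ.encode)
  | _, .ballMem i φ => Nat.pair 6 (Nat.pair i.val φ.encode)
  | _, .bexSub i φ => Nat.pair 7 (Nat.pair i.val φ.encode)
  | _, .ballSub i φ => Nat.pair 8 (Nat.pair i.val φ.encode)
  | _, .ex φ => Nat.pair 9 φ.encode
  | _, .all φ => Nat.pair 10 φ.encode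

/-- A theory (set of sentences) is recursively enumerable if the set of Gödel
numbers of its members is the domain of a partial recursive function. -/
def REset (S : Set (SF 0)) : Prop :=
  ∃ f : ℕ →. ℕ, Nat.Partrec f ∧ ∀ φ : SF 0, φ ∈ S ↔ SF.encode φ ∈ f.Dom

/-- `⟨X, E⟩ ⊨ S` for a set `S` of sentences. -/
def SatT (E : X → X → Prop) (S : Set (SF 0)) : Prop :=
  ∀ φ ∈ S, SF.Eval E φ (fun i => i.elim0)

/-! ## Axioms and axiom schemes -/

def ExtensionalityAx (E : X → X → Prop) : Prop := ∀ a b, (∀ z, E z a ↔ E z b) → a = b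
def EmptySetAx (E : X → X → Prop) : Prop := ∃ a, ∀ z, ¬ E z a
def PairAx (E : X → X → Prop) : Prop := ∀ x y, ∃ a, ∀ z, E z a ↔ (z = x ∨ z = y)
def UnionAx (E : X → X → Prop) : Prop := ∀ a, ∃ b, ∀ z, E z b ↔ ∃ y, E y a ∧ E z y
def SetDiffAx (E : X → X → Prop) : Prop := ∀ a b, ∃ c, ∀ z, E z c ↔ (E z a ∧ ¬ E z b)
def PowerAx (E : X → X → Prop) : Prop := ∀ a, ∃ p, ∀ z, E z p ↔ SubE E z a
def TransSet (E : X → X → Prop) (t : X) : Prop := ∀ y, E y t → ∀ z, E z y → E z t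
def TCoAx (E : X → X → Prop) : Prop := ∀ a, ∃ t, TransSet E t ∧ SubE E a t
def SuccOf (E : X → X → Prop) (x s : X) : Prop := ∀ z, E z s ↔ (E z x ∨ z = x)
def InductiveSet (E : X → X → Prop) (a : X) : Prop :=
  (∃ e, E e a ∧ ∀ z, ¬ E z e) ∧ ∀ x, E x a → ∃ s, E s a ∧ SuccOf E x s
def InfinityAx (E : X → X → Prop) : Prop := ∃ a, InductiveSet E a
def SetFoundationAx (E : X → X → Prop) : Prop :=
  ∀ z, (∃ x, E x z) → ∃ y, E y z ∧ ∀ x, E x y → ¬ E x z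
/-- The axiom of choice: every set of pairwise disjoint nonempty sets has a transversal. -/
def ACAx (E : X → X → Prop) : Prop :=
  ∀ a, (∀ x, E x a → ∃ z, E z x) →
    (∀ x y, E x a → E y a → x ≠ y → ∀ z, E z x → ¬ E z y) →
    ∃ c, ∀ x, E x a → ∃! z, E z c ∧ E z x

def SeparationScheme (E : X → X → Prop) (C : ∀ n, SF n → Prop) : Prop :=
  ∀ (n : ℕ) (φ : SF (n + 1)), C _ φ → ∀ (p : Fin n → X) (w : X),
    ∃ y, ∀ x, E x y ↔ (E x w ∧ φ.Eval E (Fin.snoc p x))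

def CollectionScheme (E : X → X → Prop) (C : ∀ n, SF n → Prop) : Prop :=
  ∀ (n : ℕ) (φ : SF (n + 2)), C _ φ → ∀ (p : Fin n → X) (w : X),
    (∀ x, E x w → ∃ y, φ.Eval E (Fin.snoc (Fin.snoc p x) y)) →
    ∃ c, ∀ x, E x w → ∃ y, E y c ∧ φ.Eval E (Fin.snoc (Fin.snoc p x) y)

def FoundationScheme (E : X → X → Prop) (C : ∀ n, SF n → Prop) : Prop :=
  ∀ (n : ℕ) (φ : SF (n + 1)), C _ φ → ∀ p : Fin n → X,
    (∃ x, φ.Eval E (Fin.snoc p x)) →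
    ∃ y, φ.Eval E (Fin.snoc p y) ∧ ∀ x, E x y → ¬ φ.Eval E (Fin.snoc p x)

/-! ## Theories -/

def ModelMminus (E : X → X → Prop) : Prop :=
  ExtensionalityAx E ∧ EmptySetAx E ∧ PairAx E ∧ UnionAx E ∧ SetDiffAx E ∧
    TCoAx E ∧ InfinityAx E ∧ SeparationScheme E Delta0C ∧ SetFoundationAx E

def ModelM (E : X → X → Prop) : Prop := ModelMminus E ∧ PowerAx E

def ModelKP (E : X → X → Prop) : Prop :=
  ExtensionalityAx E ∧ PairAx E ∧ UnionAx E ∧ SeparationScheme E Delta0C ∧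
    CollectionScheme E Delta0C ∧ FoundationScheme E Pi1C

def ModelKPP (E : X → X → Prop) : Prop :=
  ModelM E ∧ CollectionScheme E Delta0PC ∧ FoundationScheme E Pi1PC

def ModelMOST (E : X → X → Prop) : Prop :=
  ModelM E ∧ SeparationScheme E Sigma1C ∧ ACAx E

def ModelZF (E : X → X → Prop) : Prop :=
  ExtensionalityAx E ∧ EmptySetAx E ∧ PairAx E ∧ UnionAx E ∧ PowerAx E ∧
    InfinityAx E ∧ SeparationScheme E FullC ∧ CollectionScheme E FullC ∧
    FoundationScheme E FullC

/-! ## Internal set-theoretic machinery -/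

/-- `p = {{x}, {x, y}}` (Kuratowski pair). -/
def IsPair (E : X → X → Prop) (p x y : X) : Prop :=
  ∀ z, E z p ↔ ((∀ w, E w z ↔ w = x) ∨ (∀ w, E w z ↔ (w = x ∨ w = y)))

def FunApp (E : X → X → Prop) (f x y : X) : Prop := ∃ q, E q f ∧ IsPair E q x y

/-- `f` is a function with domain `d`. -/
def IsFuncOn (E : X → X → Prop) (f d : X) : Prop :=
  (∀ q, E q f → ∃ x y, IsPair E q x y ∧ E x d) ∧
  (∀ x y y', FunApp E f x y → FunApp E f x y' → y = y') ∧
  (∀ x, E x d → ∃ y, FunApp E f x y)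

/-- `f` is an injective function from `dom` into `cod`. -/
def InjFunInto (E : X → X → Prop) (f dom cod : X) : Prop :=
  IsFuncOn E f dom ∧ (∀ x y, FunApp E f x y → E y cod) ∧
  (∀ x x' y, FunApp E f x y → FunApp E f x' y → x = x')

/-- `|t| ≤ |κ|`. -/
def CardLe (E : X → X → Prop) (t κ : X) : Prop := ∃ f, InjFunInto E f t κ

def IsOrdinal (E : X → X → Prop) (x : X) : Prop :=
  TransSet E x ∧ ∀ y, E y x → TransSet E y

/-- An (initial ordinal =) cardinal: an ordinal that does not inject into any of
its members. -/
def IsCardinal (E : X → X → Prop) (κ : X) : Prop :=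
  IsOrdinal E κ ∧ ∀ β, E β κ → ¬ CardLe E κ β

/-- `t` is the transitive closure of the set `x`. -/
def IsTCset (E : X → X → Prop) (t x : X) : Prop :=
  TransSet E t ∧ SubE E x t ∧ ∀ u, TransSet E u → SubE E x u → SubE E t u

/-- `t` is the transitive closure of `{x}`. -/
def IsTCsingleton (E : X → X → Prop) (t x : X) : Prop :=
  TransSet E t ∧ E x t ∧ ∀ u, TransSet E u → E x u → SubE E t u

def IsOmega (E : X → X → Prop) (w : X) : Prop :=
  InductiveSet E w ∧ ∀ a, InductiveSet E a → SubE E w a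

/-- `⟨X, E⟩` is `ω`-standard: its internal natural numbers are order-isomorphic
to the standard natural numbers. -/
def OmegaStandard (E : X → X → Prop) : Prop :=
  ∀ w, IsOmega E w → ∃ f : ℕ → X, (∀ n, E (f n) w) ∧ (∀ x, E x w → ∃ n, x = f n) ∧
    ∀ m n : ℕ, (E (f m) (f n) ↔ m < n)

/-- `f` is (a function coding) the cumulative hierarchy `β ↦ V_β` for `β ∈ α`,
using `V_β = ⋃_{γ∈β} 𝒫(V_γ)`. -/
def IsRK (E : X → X → Prop) (α f : X) : Prop :=
  IsOrdinal E α ∧ IsFuncOn E f α ∧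
  ∀ β vβ, E β α → FunApp E f β vβ →
    ∀ x, E x vβ ↔ ∃ γ, E γ β ∧ ∃ vγ, FunApp E f γ vγ ∧ SubE E x vγ

/-- Internal rank comparison `ρ(x) ≤ ρ(y)`: `x` belongs to every stage of the
cumulative hierarchy that `y` belongs to. -/
def RankLe (E : X → X → Prop) (x y : X) : Prop :=
  ∀ α f β v, IsRK E α f → E β α → FunApp E f β v → E y v → E x v

/-- External `n`-th von Neumann natural number. -/
def IsVN (E : X → X → Prop) : ℕ → X → Prop
  | 0, x => ∀ z, ¬ E z x
  | (n + 1), x => ∃ y, IsVN E n y ∧ SuccOf E y x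

/-- `a` is the `n`-th infinite cardinal `ℵ_n` (for external `n`, as computed in
the model): `ℵ₀ = ω`, and `ℵ_{n+1}` is the least cardinal above `ℵ_n`. -/
def IsAleph (E : X → X → Prop) : ℕ → X → Prop
  | 0, a => IsOmega E a
  | (n + 1), a => ∃ b, IsAleph E n b ∧ IsCardinal E a ∧ E b a ∧
      ∀ c, IsCardinal E c → E b c → (c = a ∨ E a c)

/-- `a` is the cardinal `ℵ_ω` of the model: the least limit cardinal above `ω`. -/
def IsAlephOmega (E : X → X → Prop) (a : X) : Prop :=
  (IsCardinal E a ∧ (∃ w, IsOmega E w ∧ E w a) ∧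
    (∀ β, E β a → ∃ μ, IsCardinal E μ ∧ E β μ ∧ E μ a)) ∧
  ∀ a', (IsCardinal E a' ∧ (∃ w, IsOmega E w ∧ E w a') ∧
    (∀ β, E β a' → ∃ μ, IsCardinal E μ ∧ E β μ ∧ E μ a')) → (a = a' ∨ E a a')

/-! ## Internal satisfaction and the constructible hierarchy (for `V = L`) -/

/-- `c = ⟨n, a⟩` with the tag `n` an external natural (internally coded). -/
def TaggedBy (E : X → X → Prop) (c : X) (n : ℕ) (a : X) : Prop :=
  ∃ t, IsVN E n t ∧ IsPair E c t a

def CodeMem (E : X → X → Prop) (c i j : X) : Prop := ∃ p, IsPair E p i j ∧ TaggedBy E c 0 p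
def CodeEq (E : X → X → Prop) (c i j : X) : Prop := ∃ p, IsPair E p i j ∧ TaggedBy E c 1 p
def CodeNot (E : X → X → Prop) (c' c : X) : Prop := TaggedBy E c' 2 c
def CodeAnd (E : X → X → Prop) (c' c₁ c₂ : X) : Prop := ∃ p, IsPair E p c₁ c₂ ∧ TaggedBy E c' 3 p
def CodeEx (E : X → X → Prop) (c' i c : X) : Prop := ∃ p, IsPair E p i c ∧ TaggedBy E c' 4 p

/-- `d` is closed under the internal formation rules for codes of formulas with
variables indexed by elements of `w` (the internal `ω`). -/
def ClosedCode (E : X → X → Prop) (w d : X) : Prop :=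
  (∀ i j c, E i w → E j w → CodeMem E c i j → E c d) ∧
  (∀ i j c, E i w → E j w → CodeEq E c i j → E c d) ∧
  (∀ c c', E c d → CodeNot E c' c → E c' d) ∧
  (∀ c₁ c₂ c', E c₁ d → E c₂ d → CodeAnd E c' c₁ c₂ → E c' d) ∧
  (∀ i c c', E i w → E c d → CodeEx E c' i c → E c' d)

/-- `c` is an internal code of a first-order formula of the language of set theory. -/
def FormCode (E : X → X → Prop) (w c : X) : Prop := ∀ d, ClosedCode E w d → E c d

/-- An internal assignment of elements of `a` to the variables. -/
def IsAssign (E : X → X → Prop) (w a v : X) : Prop :=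
  IsFuncOn E v w ∧ ∀ i y, FunApp E v i y → E y a

/-- `v' = v[i ↦ x]`. -/
def UpdateAssign (E : X → X → Prop) (w v : X) (i x v' : X) : Prop :=
  FunApp E v' i x ∧ ∀ j, E j w → j ≠ i → ∀ y, (FunApp E v j y ↔ FunApp E v' j y)

def PairIn (E : X → X → Prop) (s c v : X) : Prop := ∃ q, E q s ∧ IsPair E q c v

/-- `s` is a (full) satisfaction class for the set structure `⟨a, E⟩`: a set of
pairs ⟨code, assignment⟩ obeying the Tarski conditions. -/
def SatSet (E : X → X → Prop) (w a s : X) : Prop :=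
  (∀ q, E q s → ∃ c v, IsPair E q c v ∧ FormCode E w c ∧ IsAssign E w a v) ∧
  (∀ i j c v xi xj, E i w → E j w → CodeMem E c i j → IsAssign E w a v →
    FunApp E v i xi → FunApp E v j xj → (PairIn E s c v ↔ E xi xj)) ∧
  (∀ i j c v xi xj, E i w → E j w → CodeEq E c i j → IsAssign E w a v →
    FunApp E v i xi → FunApp E v j xj → (PairIn E s c v ↔ xi = xj)) ∧
  (∀ c c' v, FormCode E w c → CodeNot E c' c → IsAssign E w a v →
    (PairIn E s c' v ↔ ¬ PairIn E s c v)) ∧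
  (∀ c₁ c₂ c' v, FormCode E w c₁ → FormCode E w c₂ → CodeAnd E c' c₁ c₂ →
    IsAssign E w a v → (PairIn E s c' v ↔ (PairIn E s c₁ v ∧ PairIn E s c₂ v))) ∧
  (∀ i c c' v, E i w → FormCode E w c → CodeEx E c' i c → IsAssign E w a v →
    (PairIn E s c' v ↔ ∃ x v', E x a ∧ IsAssign E w a v' ∧ UpdateAssign E w v i x v' ∧
      PairIn E s c v'))

/-- `b` is a subset of `a` definable over `⟨a, E⟩` (with parameters from `a`). -/
def DefSub (E : X → X → Prop) (w a s b : X) : Prop :=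
  SubE E b a ∧ ∃ c, FormCode E w c ∧ ∃ v, IsAssign E w a v ∧ ∃ i, E i w ∧
    ∀ x, E x b ↔ (E x a ∧ ∃ v', IsAssign E w a v' ∧ UpdateAssign E w v i x v' ∧
      PairIn E s c v')

/-- `f` codes the constructible hierarchy `β ↦ L_β` for `β ∈ α`, using
`L_β = ⋃_{γ∈β} Def(L_γ)`. -/
def IsLHier (E : X → X → Prop) (w f α : X) : Prop :=
  IsOrdinal E α ∧ IsFuncOn E f α ∧
  ∀ β vβ, E β α → FunApp E f β vβ →
    ∀ x, E x vβ ↔ ∃ γ, E γ β ∧ ∃ vγ, FunApp E f γ vγ ∧ ∃ s, SatSet E w vγ s ∧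
      DefSub E w vγ s x

/-- The axiom `V = L`: every set belongs to some level of the constructible hierarchy. -/
def VeqL (E : X → X → Prop) : Prop :=
  ∀ w, IsOmega E w → ∀ x, ∃ α f β vβ, IsLHier E w f α ∧ E β α ∧ FunApp E f β vβ ∧ E x vβ

/-! ## Extensions -/

/-- The substructure of `⟨X, E⟩` with underlying set `A`. -/
def restrict (E : X → X → Prop) (A : Set X) : A → A → Prop := fun a b => E a.1 b.1

/-- `B` is an end extension of `A` (both substructures of an ambient `⟨X, E⟩`). -/
def EndExtIn (E : X → X → Prop) (A B : Set X) : Prop :=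
  A ⊆ B ∧ ∀ x y, x ∈ B → y ∈ A → E x y → x ∈ A

/-- `B` is a powerset-preserving end extension of `A` (within an ambient `⟨X, E⟩`);
`x ⊆ y` is computed in `B`. -/
def PowExtIn (E : X → X → Prop) (A B : Set X) : Prop :=
  EndExtIn E A B ∧ ∀ x y, x ∈ B → y ∈ A → (∀ z, z ∈ B → E z x → E z y) → x ∈ A

/-- The whole structure `⟨X, E⟩` is an end extension of its substructure on `A`. -/
def EndExtSet (E : X → X → Prop) (A : Set X) : Prop :=
  ∀ x y, y ∈ A → E x y → x ∈ A

/-- `⟨X, E⟩` is a powerset-preserving end extension of its substructure on `A`. -/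
def PowExtSet (E : X → X → Prop) (A : Set X) : Prop :=
  EndExtSet E A ∧ ∀ x y, y ∈ A → SubE E x y → x ∈ A

/-- `⟨X, E⟩` is a rank extension of its substructure on `A`. -/
def RankExtSet (E : X → X → Prop) (A : Set X) : Prop :=
  PowExtSet E A ∧ ∀ x y, y ∈ A → RankLe E x y → x ∈ A

/-- The extension `⟨X, E⟩` of its substructure on `A` is proper and topless. -/
def ToplessSet (E : X → X → Prop) (A : Set X) : Prop :=
  A ≠ Set.univ ∧ ∀ c, (∀ x, E x c → x ∈ A) → c ∈ A

/-- The extension `⟨X, E⟩` of its substructure on `A` is proper and blunt (not topless). -/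
def BluntSet (E : X → X → Prop) (A : Set X) : Prop :=
  A ≠ Set.univ ∧ ¬ ToplessSet E A

/-! ## Weak dependent choice -/

/-- `δ_ω^φ(b, f, p)`: `f` is a function on `ω` with `f(0) = {b}` tracing the
`φ`-successor relation. -/
def IsWDCWitness (E : X → X → Prop) {n : ℕ} (φ : SF (n + 2)) (p : Fin n → X)
    (w b f : X) : Prop :=
  IsFuncOn E f w ∧
  (∃ z v, (∀ u, ¬ E u z) ∧ E z w ∧ FunApp E f z v ∧ ∀ t, E t v ↔ t = b) ∧
  ∀ m m' vm vm', E m w → SuccOf E m m' → E m' w → FunApp E f m vm → FunApp E f m' vm' →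
    ((∀ x, E x vm → ∃ y, E y vm' ∧ φ.Eval E (Fin.snoc (Fin.snoc p x) y)) ∧
     (∀ y, E y vm' → ∀ x, E x vm → φ.Eval E (Fin.snoc (Fin.snoc p x) y)))

/-- The scheme `Δ₀^𝒫-WDC_ω`. -/
def WDComega (E : X → X → Prop) : Prop :=
  ∀ (n : ℕ) (φ : SF (n + 2)), Delta0PC _ φ → ∀ p : Fin n → X,
    (∀ x, ∃ y, φ.Eval E (Fin.snoc (Fin.snoc p x) y)) →
    ∀ w, IsOmega E w → ∀ b, ∃ f, IsWDCWitness E φ p w b f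

/-! ## Internal well-founded extensional relations (for `H_{≤κ}`) -/

def RRel (E : X → X → Prop) (R a b : X) : Prop := ∃ p, E p R ∧ IsPair E p a b

def RelOn (E : X → X → Prop) (R k : X) : Prop :=
  ∀ p, E p R → ∃ a b, IsPair E p a b ∧ E a k ∧ E b k

/-- `BFEXT(R, k)`: `R ⊆ k × k` is extensional on `k`, has a top element, and every
nonempty subset of `k` has an `R`-minimal element. -/
def BFEXT (E : X → X → Prop) (R k : X) : Prop :=
  RelOn E R k ∧
  (∀ a b, E a k → E b k → (∀ c, E c k → (RRel E R c a ↔ RRel E R c b)) → a = b) ∧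
  (∃ t, E t k ∧ ∀ b, E b k → b ≠ t → RRel E R b t) ∧
  (∀ S, SubE E S k → (∃ z, E z S) → ∃ m, E m S ∧ ∀ y, E y S → ¬ RRel E R y m)

/-- `f` is an isomorphism of `⟨k, R⟩` with `⟨T, ∈⟩`. -/
def IsoOnto (E : X → X → Prop) (R k f T : X) : Prop :=
  IsFuncOn E f k ∧ (∀ x y, FunApp E f x y → E y T) ∧
  (∀ y, E y T → ∃ x, E x k ∧ FunApp E f x y) ∧
  (∀ x x' y, FunApp E f x y → FunApp E f x' y → x = x') ∧
  ∀ a b ya yb, E a k → E b k → FunApp E f a ya → FunApp E f b yb →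
    (RRel E R a b ↔ E ya yb)

/-- The predicate `Xv = H_{≤κ} = {x : |TC(x)| ≤ κ}`. -/
def HleqPred (E : X → X → Prop) (Xv κ : X) : Prop :=
  IsCardinal E κ ∧ ∀ x, E x Xv ↔ ∃ t, IsTCset E t x ∧ CardLe E t κ

/-- The explicit conjunction (i) ∧ (ii) ∧ (iii) asserting `Xv = H_{≤κ}`. -/
def ExplicitH (E : X → X → Prop) (Xv κ : X) : Prop :=
  IsCardinal E κ ∧
  (∀ R, BFEXT E R κ → ∃ x f T, E x Xv ∧ E f Xv ∧ E T Xv ∧ IsTCsingleton E T x ∧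
    IsoOnto E R κ f T) ∧
  (∀ x, E x Xv → ∃ T f, E T Xv ∧ E f Xv ∧ IsTCsingleton E T x ∧ InjFunInto E f T κ)

/-! ### Auxiliary machinery -/

section Aux

variable {E : X → X → Prop}

/-- Extend a variable renaming under one binder. -/
def extUp {n m : ℕ} (f : Fin n → Fin m) : Fin (n + 1) → Fin (m + 1) :=
  Fin.snoc (fun k => (f k).castSucc) (Fin.last m)

/-- Renaming of variables in a formula. -/
def SF.rename : {n m : ℕ} → (Fin n → Fin m) → SF n → SF m
  | _, _, f, .mem i j => .mem (f i) (f j)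
  | _, _, f, .eq i j => .eq (f i) (f j)
  | _, _, f, .not φ => .not (φ.rename f)
  | _, _, f, .and φ ψ => .and (φ.rename f) (ψ.rename f)
  | _, _, f, .or φ ψ => .or (φ.rename f) (ψ.rename f)
  | _, _, f, .bexMem i φ => .bexMem (f i) (φ.rename (extUp f))
  | _, _, f, .ballMem i φ => .ballMem (f i) (φ.rename (extUp f))
  | _, _, f, .bexSub i φ => .bexSub (f i) (φ.rename (extUp f))
  | _, _, f, .ballSub i φ => .ballSub (f i) (φ.rename (extUp f))
  | _, _, f, .ex φ => .ex (φ.rename (extUp f))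
  | _, _, f, .all φ => .all (φ.rename (extUp f))

lemma snoc_comp_extUp {n m : ℕ} (f : Fin n → Fin m) (v : Fin m → X) (x : X) :
    (Fin.snoc v x : Fin (m+1) → X) ∘ extUp f = Fin.snoc (v ∘ f) x := by
  funext i
  refine Fin.lastCases ?_ ?_ i <;> simp [extUp, Function.comp]

lemma eval_rename {n : ℕ} (φ : SF n) : ∀ {m : ℕ} (f : Fin n → Fin m) (v : Fin m → X),
    (φ.rename f).Eval E v ↔ φ.Eval E (v ∘ f) := by
  induction φ with
  | mem i j => intro m f v; rfl
  | eq i j => intro m f v; rfl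
  | not φ ih => intro m f v; simp [SF.rename, SF.Eval, ih]
  | and φ ψ ih1 ih2 => intro m f v; simp [SF.rename, SF.Eval, ih1, ih2]
  | or φ ψ ih1 ih2 => intro m f v; simp [SF.rename, SF.Eval, ih1, ih2]
  | bexMem i φ ih =>
      intro m f v
      simp only [SF.rename, SF.Eval, ih, snoc_comp_extUp, Function.comp]
  | ballMem i φ ih =>
      intro m f v
      simp only [SF.rename, SF.Eval, ih, snoc_comp_extUp, Function.comp]
  | bexSub i φ ih =>
      intro m f v
      simp only [SF.rename, SF.Eval, ih, snoc_comp_extUp, Function.comp]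
  | ballSub i φ ih =>
      intro m f v
      simp only [SF.rename, SF.Eval, ih, snoc_comp_extUp, Function.comp]
  | ex φ ih =>
      intro m f v
      simp only [SF.rename, SF.Eval, ih, snoc_comp_extUp, Function.comp]
  | all φ ih =>
      intro m f v
      simp only [SF.rename, SF.Eval, ih, snoc_comp_extUp, Function.comp]

lemma rename_delta0 {n : ℕ} (φ : SF n) (h : φ.IsDelta0) :
    ∀ {m : ℕ} (f : Fin n → Fin m), (φ.rename f).IsDelta0 := by
  induction φ with
  | mem i j => intro m f; trivial
  | eq i j => intro m f; trivial
  | not φ ih => intro m f; exact ih h _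
  | and φ ψ ih1 ih2 => intro m f; exact ⟨ih1 h.1 _, ih2 h.2 _⟩
  | or φ ψ ih1 ih2 => intro m f; exact ⟨ih1 h.1 _, ih2 h.2 _⟩
  | bexMem i φ ih => intro m f; exact ih h _
  | ballMem i φ ih => intro m f; exact ih h _
  | bexSub i φ ih => exact absurd h id
  | ballSub i φ ih => exact absurd h id
  | ex φ ih => exact absurd h id
  | all φ ih => exact absurd h id

lemma rename_delta0P {n : ℕ} (φ : SF n) (h : φ.IsDelta0P) :
    ∀ {m : ℕ} (f : Fin n → Fin m), (φ.rename f).IsDelta0P := by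
  induction φ with
  | mem i j => intro m f; trivial
  | eq i j => intro m f; trivial
  | not φ ih => intro m f; exact ih h _
  | and φ ψ ih1 ih2 => intro m f; exact ⟨ih1 h.1 _, ih2 h.2 _⟩
  | or φ ψ ih1 ih2 => intro m f; exact ⟨ih1 h.1 _, ih2 h.2 _⟩
  | bexMem i φ ih => intro m f; exact ih h _
  | ballMem i φ ih => intro m f; exact ih h _
  | bexSub i φ ih => intro m f; exact ih h _
  | ballSub i φ ih => intro m f; exact ih h _
  | ex φ ih => exact absurd h id
  | all φ ih => exact absurd h id

/-- The swap of the last two variables. -/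
def swap2 (n : ℕ) : Fin (n + 2) → Fin (n + 2) :=
  Fin.snoc (Fin.snoc (fun k : Fin n => k.castSucc.castSucc) (Fin.last (n + 1)))
    ((Fin.last n).castSucc)

lemma comp_swap2 {n : ℕ} (v : Fin n → X) (a b : X) :
    (Fin.snoc (Fin.snoc v a) b : Fin (n+2) → X) ∘ swap2 n = Fin.snoc (Fin.snoc v b) a := by
  funext i
  refine Fin.lastCases ?_ (fun j => ?_) i
  · simp [swap2, Function.comp]
  · refine Fin.lastCases ?_ (fun k => ?_) j <;> simp [swap2, Function.comp]

end Aux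

section Aux2

variable {E : X → X → Prop}

/-- Translation of a `Δ₀^𝒫` formula to a `Δ₀` formula with one extra parameter
(a transitive, subset-closed set bounding the quantifiers), placed last. -/
def tr : {n : ℕ} → SF n → SF (n + 1)
  | _, .mem i j => .mem i.castSucc j.castSucc
  | _, .eq i j => .eq i.castSucc j.castSucc
  | _, .not φ => .not (tr φ)
  | _, .and φ ψ => .and (tr φ) (tr ψ)
  | _, .or φ ψ => .or (tr φ) (tr ψ)
  | n, .bexMem i φ => .bexMem i.castSucc ((tr φ).rename (swap2 _))
  | n, .ballMem i φ => .ballMem i.castSucc ((tr φ).rename (swap2 _))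
  | n, .bexSub i φ =>
      .bexMem (Fin.last _)
        (.and (.ballMem (Fin.last _) (.mem (Fin.last _) i.castSucc.castSucc.castSucc))
          ((tr φ).rename (swap2 _)))
  | n, .ballSub i φ =>
      .ballMem (Fin.last _)
        (.not (.and (.ballMem (Fin.last _) (.mem (Fin.last _) i.castSucc.castSucc.castSucc))
          (.not ((tr φ).rename (swap2 _)))))
  | n, .ex φ => .ex ((tr φ).rename (swap2 _))
  | n, .all φ => .all ((tr φ).rename (swap2 _))

/-- A transitive set closed under subsets. -/
def GoodU (E : X → X → Prop) (u : X) : Prop :=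
  (∀ a, E a u → ∀ b, E b a → E b u) ∧ (∀ a, E a u → ∀ b, SubE E b a → E b u)

lemma tr_delta0 : ∀ {n : ℕ} (φ : SF n), φ.IsDelta0P → (tr φ).IsDelta0 := by
  intro n φ
  induction φ with
  | mem i j => intro _; trivial
  | eq i j => intro _; trivial
  | not φ ih => exact fun h => ih h
  | and φ ψ ih1 ih2 => exact fun h => ⟨ih1 h.1, ih2 h.2⟩
  | or φ ψ ih1 ih2 => exact fun h => ⟨ih1 h.1, ih2 h.2⟩
  | bexMem i φ ih => exact fun h => rename_delta0 _ (ih h) _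
  | ballMem i φ ih => exact fun h => rename_delta0 _ (ih h) _
  | bexSub i φ ih => exact fun h => ⟨trivial, rename_delta0 _ (ih h) _⟩
  | ballSub i φ ih => exact fun h => ⟨trivial, rename_delta0 _ (ih h) _⟩
  | ex φ ih => exact fun h => absurd h id
  | all φ ih => exact fun h => absurd h id

lemma tr_eval {n : ℕ} (φ : SF n) (hφ : φ.IsDelta0P) :
    ∀ (v : Fin n → X) (u : X), GoodU E u → (∀ i, E (v i) u) →
      ((tr φ).Eval E (Fin.snoc v u) ↔ φ.Eval E v) := by
  induction φ with
  | mem i j =>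
      intro v u hu hv
      simp [tr, SF.Eval]
  | eq i j =>
      intro v u hu hv
      simp [tr, SF.Eval]
  | not φ ih =>
      intro v u hu hv
      simp [tr, SF.Eval, ih hφ v u hu hv]
  | and φ ψ ih1 ih2 =>
      intro v u hu hv
      simp [tr, SF.Eval, ih1 hφ.1 v u hu hv, ih2 hφ.2 v u hu hv]
  | or φ ψ ih1 ih2 =>
      intro v u hu hv
      simp [tr, SF.Eval, ih1 hφ.1 v u hu hv, ih2 hφ.2 v u hu hv]
  | @bexMem n i φ ih =>
      intro v u hu hv
      simp only [tr, SF.Eval, Fin.snoc_castSucc, eval_rename, comp_swap2]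
      constructor
      · rintro ⟨x, hx, h⟩
        refine ⟨x, hx, ?_⟩
        rw [← ih hφ (Fin.snoc v x) u hu ?_]
        · exact h
        · intro k
          refine Fin.lastCases ?_ (fun j => ?_) k
          · simpa using hu.1 _ (hv i) _ hx
          · simpa using hv j
      · rintro ⟨x, hx, h⟩
        refine ⟨x, hx, ?_⟩
        rw [ih hφ (Fin.snoc v x) u hu ?_]
        · exact h
        · intro k
          refine Fin.lastCases ?_ (fun j => ?_) k
          · simpa using hu.1 _ (hv i) _ hx
          · simpa using hv j
  | @ballMem n i φ ih =>
      intro v u hu hv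
      simp only [tr, SF.Eval, Fin.snoc_castSucc, eval_rename, comp_swap2]
      have key : ∀ x, E x (v i) →
          ((tr φ).Eval E (Fin.snoc (Fin.snoc v x) u) ↔ φ.Eval E (Fin.snoc v x)) := by
        intro x hx
        refine ih hφ (Fin.snoc v x) u hu ?_
        intro k
        refine Fin.lastCases ?_ (fun j => ?_) k
        · simpa using hu.1 _ (hv i) _ hx
        · simpa using hv j
      exact ⟨fun h x hx => (key x hx).1 (h x hx), fun h x hx => (key x hx).2 (h x hx)⟩
  | @bexSub n i φ ih =>
      intro v u hu hv
      simp only [tr, SF.Eval, Fin.snoc_castSucc, Fin.snoc_last, eval_rename, comp_swap2]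
      constructor
      · rintro ⟨x, hxu, hsub, h⟩
        have hsub' : SubE E x (v i) := by
          intro z hz; simpa using hsub z hz
        refine ⟨x, hsub', ?_⟩
        rw [← ih hφ (Fin.snoc v x) u hu ?_]
        · exact h
        · intro k
          refine Fin.lastCases ?_ (fun j => ?_) k
          · simpa using hxu
          · simpa using hv j
      · rintro ⟨x, hsub, h⟩
        have hxu : E x u := hu.2 _ (hv i) _ hsub
        refine ⟨x, hxu, ?_, ?_⟩
        · intro z hz; simpa using hsub z hz
        · rw [ih hφ (Fin.snoc v x) u hu ?_]
          · exact h
          · intro k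
            refine Fin.lastCases ?_ (fun j => ?_) k
            · simpa using hxu
            · simpa using hv j
  | @ballSub n i φ ih =>
      intro v u hu hv
      simp only [tr, SF.Eval, Fin.snoc_castSucc, Fin.snoc_last, eval_rename, comp_swap2]
      constructor
      · intro h x hsub
        have hxu : E x u := hu.2 _ (hv i) _ hsub
        have := h x hxu
        rw [not_and, not_not] at this
        have h2 := this (by intro z hz; simpa using hsub z hz)
        rw [← ih hφ (Fin.snoc v x) u hu ?_]
        · exact h2
        · intro k
          refine Fin.lastCases ?_ (fun j => ?_) k
          · simpa using hxu
          · simpa using hv j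
      · intro h x hxu
        rw [not_and, not_not]
        intro hsub
        have hsub' : SubE E x (v i) := by intro z hz; simpa using hsub z hz
        rw [ih hφ (Fin.snoc v x) u hu ?_]
        · exact h x hsub'
        · intro k
          refine Fin.lastCases ?_ (fun j => ?_) k
          · simpa using hxu
          · simpa using hv j
  | ex φ ih => exact absurd hφ id
  | all φ ih => exact absurd hφ id

end Aux2

section Aux3

variable {E : X → X → Prop}

lemma binUnionEx (hPair : PairAx E) (hUnion : UnionAx E) (a b : X) :
    ∃ c, ∀ z, E z c ↔ (E z a ∨ E z b) := by
  obtain ⟨d, hd⟩ := hPair a b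
  obtain ⟨c, hc⟩ := hUnion d
  refine ⟨c, fun z => ?_⟩
  rw [hc]
  constructor
  · rintro ⟨y, hy, hz⟩
    rcases (hd y).1 hy with rfl | rfl
    · exact Or.inl hz
    · exact Or.inr hz
  · rintro (hz | hz)
    · exact ⟨a, (hd a).2 (Or.inl rfl), hz⟩
    · exact ⟨b, (hd b).2 (Or.inr rfl), hz⟩

lemma finSetEx (hPair : PairAx E) (hUnion : UnionAx E) :
    ∀ (n : ℕ) (p : Fin n → X) (w : X), ∃ a, E w a ∧ ∀ i, E (p i) a := by
  intro n
  induction n with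
  | zero =>
      intro p w
      obtain ⟨a, ha⟩ := hPair w w
      exact ⟨a, (ha w).2 (Or.inl rfl), fun i => i.elim0⟩
  | succ n ih =>
      intro p w
      obtain ⟨a, hwa, ha⟩ := ih (fun k => p k.castSucc) w
      obtain ⟨s, hs⟩ := hPair (p (Fin.last n)) (p (Fin.last n))
      obtain ⟨c, hc⟩ := binUnionEx hPair hUnion a s
      refine ⟨c, (hc w).2 (Or.inl hwa), fun i => ?_⟩
      refine Fin.lastCases ?_ (fun j => ?_) i
      · exact (hc _).2 (Or.inr ((hs _).2 (Or.inl rfl)))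
      · exact (hc _).2 (Or.inl (ha j))

lemma goodAbove (hPair : PairAx E) (hTCo : TCoAx E) (hPow : PowerAx E) (a : X) :
    ∃ u, GoodU E u ∧ E a u := by
  obtain ⟨sa, hsa⟩ := hPair a a
  obtain ⟨t, hTrans, hSub⟩ := hTCo sa
  obtain ⟨u, hu⟩ := hPow t
  have hat : E a t := hSub a ((hsa a).2 (Or.inl rfl))
  refine ⟨u, ⟨?_, ?_⟩, ?_⟩
  · intro x hx b hb
    have hbt : E b t := (hu x).1 hx b hb
    exact (hu b).2 (hTrans b hbt)
  · intro x hx b hb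
    refine (hu b).2 (fun z hz => (hu x).1 hx z (hb z hz))
  · exact (hu a).2 (hTrans a hat)

/-- `Δ₀^𝒫`-Separation holds in `M`. -/
lemma sepP (hM : ModelM E) :
    ∀ (n : ℕ) (φ : SF (n + 1)), φ.IsDelta0P → ∀ (p : Fin n → X) (w : X),
      ∃ y, ∀ x, E x y ↔ (E x w ∧ φ.Eval E (Fin.snoc p x)) := by
  obtain ⟨⟨hExt, hEmp, hPair, hUnion, hDiff, hTCo, hInf, hSep, hFound⟩, hPow⟩ := hM
  intro n φ hφ p w
  obtain ⟨a, hwa, hpa⟩ := finSetEx hPair hUnion n p w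
  obtain ⟨u, hu, hau⟩ := goodAbove hPair hTCo hPow a
  have hpu : ∀ i, E (p i) u := fun i => hu.1 _ hau _ (hpa i)
  have hwu : E w u := hu.1 _ hau _ hwa
  obtain ⟨y, hy⟩ := hSep (n + 1) ((tr φ).rename (swap2 n))
    (rename_delta0 _ (tr_delta0 φ hφ) _) (Fin.snoc p u) w
  refine ⟨y, fun x => ?_⟩
  rw [hy x, eval_rename, comp_swap2]
  refine and_congr_right fun hxw => ?_
  have hxu : E x u := hu.1 _ hwu _ hxw
  refine tr_eval φ hφ (Fin.snoc p x) u hu fun i => ?_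
  refine Fin.lastCases ?_ (fun j => ?_) i
  · simpa using hxu
  · simpa using hpu j

end Aux3

section Aux4

variable {E : X → X → Prop}

/-- `z = {x}` (extensionally). -/
def SgS (E : X → X → Prop) (z x : X) : Prop := E x z ∧ ∀ w, E w z → w = x

/-- `z = {x, y}` (extensionally). -/
def PrS (E : X → X → Prop) (z x y : X) : Prop :=
  E x z ∧ E y z ∧ ∀ w, E w z → (w = x ∨ w = y)

/-- `P = ⟨x, y⟩` (Kuratowski, extensionally). -/
def PSS (E : X → X → Prop) (P x y : X) : Prop :=
  (∀ z, E z P → (SgS E z x ∨ PrS E z x y)) ∧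
  (∃ z, E z P ∧ SgS E z x) ∧ (∃ z, E z P ∧ PrS E z x y)

def sgF {m : ℕ} (is ix : Fin m) : SF m :=
  .and (.mem ix is) (.ballMem is (.eq (Fin.last m) ix.castSucc))

lemma sgF_eval (is ix : Fin m) (v : Fin m → X) :
    (sgF is ix).Eval E v ↔ SgS E (v is) (v ix) := by
  simp [sgF, SF.Eval, SgS, Fin.snoc_castSucc, Fin.snoc_last]

def prF {m : ℕ} (is ix iy : Fin m) : SF m :=
  .and (.mem ix is) (.and (.mem iy is)
    (.ballMem is (.or (.eq (Fin.last m) ix.castSucc) (.eq (Fin.last m) iy.castSucc))))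

lemma prF_eval (is ix iy : Fin m) (v : Fin m → X) :
    (prF is ix iy).Eval E v ↔ PrS E (v is) (v ix) (v iy) := by
  simp [prF, SF.Eval, PrS, Fin.snoc_castSucc, Fin.snoc_last, and_assoc]

def psF {m : ℕ} (iP ix iy : Fin m) : SF m :=
  .and (.ballMem iP (.or (sgF (Fin.last m) ix.castSucc) (prF (Fin.last m) ix.castSucc iy.castSucc)))
    (.and (.bexMem iP (sgF (Fin.last m) ix.castSucc))
      (.bexMem iP (prF (Fin.last m) ix.castSucc iy.castSucc)))

lemma psF_eval (iP ix iy : Fin m) (v : Fin m → X) :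
    (psF iP ix iy).Eval E v ↔ PSS E (v iP) (v ix) (v iy) := by
  simp [psF, SF.Eval, PSS, SgS, PrS, sgF_eval, prF_eval, Fin.snoc_castSucc, Fin.snoc_last]

lemma sgF_delta0P (is ix : Fin m) : (sgF is ix).IsDelta0P := by
  simp [sgF, SF.IsDelta0P]
lemma prF_delta0P (is ix iy : Fin m) : (prF is iy ix).IsDelta0P := by
  simp [prF, SF.IsDelta0P]
lemma psF_delta0P (iP ix iy : Fin m) : (psF iP ix iy).IsDelta0P :=
  ⟨⟨sgF_delta0P _ _, prF_delta0P _ _ _⟩, sgF_delta0P _ _, prF_delta0P _ _ _⟩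

/-- Bounded search for a Kuratowski pair decomposition of the value at `iP`. -/
def pairScope {m : ℕ} (iP : Fin m) (body : SF (m + 4)) : SF m :=
  .bexMem iP <| .bexMem (Fin.last m) <| .bexMem iP.castSucc.castSucc <|
    .bexMem (Fin.last (m + 2)) <|
      .and (psF iP.castSucc.castSucc.castSucc.castSucc
        ((Fin.last (m + 1)).castSucc.castSucc) (Fin.last (m + 3))) body

lemma pairScope_eval (iP : Fin m) (body : SF (m + 4)) (v : Fin m → X) :
    (pairScope iP body).Eval E v ↔
      ∃ s, E s (v iP) ∧ ∃ x, E x s ∧ ∃ s', E s' (v iP) ∧ ∃ y, E y s' ∧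
        PSS E (v iP) x y ∧
          body.Eval E (Fin.snoc (Fin.snoc (Fin.snoc (Fin.snoc v s) x) s') y) := by
  simp [pairScope, SF.Eval, psF_eval, PSS, SgS, PrS, Fin.snoc_castSucc, Fin.snoc_last]

lemma pairScope_delta0P (iP : Fin m) (body : SF (m + 4)) (hb : body.IsDelta0P) :
    (pairScope iP body).IsDelta0P :=
  ⟨psF_delta0P _ _ _, hb⟩

end Aux4

section Aux5

variable {E : X → X → Prop}

/-- Semantic "is a von Neumann natural number". -/
def NatSem (E : X → X → Prop) (x : X) : Prop :=
  TransSet E x ∧ (∀ y, E y x → TransSet E y) ∧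
  (∀ y, E y x → ((∀ z, ¬ E z y) ∨ ∃ z, E z y ∧ SuccOf E z y)) ∧
  ((∀ z, ¬ E z x) ∨ ∃ z, E z x ∧ SuccOf E z x)

def transF {m : ℕ} (i : Fin m) : SF m :=
  .ballMem i (.ballMem (Fin.last m) (.mem (Fin.last (m + 1)) i.castSucc.castSucc))

def succOfF {m : ℕ} (iz iy : Fin m) : SF m :=
  .and (.mem iz iy) (.and
    (.ballMem iy (.or (.mem (Fin.last m) iz.castSucc) (.eq (Fin.last m) iz.castSucc)))
    (.ballMem iz (.mem (Fin.last m) iy.castSucc)))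

def emptyF {m : ℕ} (i : Fin m) : SF m :=
  .ballMem i (.not (.eq (Fin.last m) (Fin.last m)))

def zsF {m : ℕ} (i : Fin m) : SF m :=
  .or (emptyF i) (.bexMem i (succOfF (Fin.last m) i.castSucc))

def natF : SF 1 :=
  .and (transF (Fin.last 0)) (.and (.ballMem (Fin.last 0) (transF (Fin.last 1)))
    (.and (.ballMem (Fin.last 0) (zsF (Fin.last 1))) (zsF (Fin.last 0))))

lemma zsAux (y : X) :
    ((∀ u, E u y → ¬True) ∨
      ∃ u, E u y ∧ E u y ∧ (∀ t, E t y → (E t u ∨ t = u)) ∧ ∀ t, E t u → E t y) ↔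
      ((∀ z, ¬ E z y) ∨ ∃ z, E z y ∧ SuccOf E z y) := by
  constructor
  · rintro (h | ⟨z, hz, _, h2, h3⟩)
    · exact Or.inl fun z hz => (h z hz) trivial
    · exact Or.inr ⟨z, hz, fun u =>
        ⟨fun hu => h2 u hu, fun hu => hu.elim (fun hh => h3 u hh) (fun hh => hh ▸ hz)⟩⟩
  · rintro (h | ⟨z, hz, hS⟩)
    · exact Or.inl fun u hu _ => h u hu
    · exact Or.inr ⟨z, hz, hz, fun u hu => (hS u).1 hu, fun u hu => (hS u).2 (Or.inl hu)⟩

lemma natF_eval (p : Fin 0 → X) (x : X) :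
    natF.Eval E (Fin.snoc p x) ↔ NatSem E x := by
  simp only [natF, SF.Eval, Fin.snoc_castSucc, Fin.snoc_last]
  exact and_congr Iff.rfl (and_congr Iff.rfl (and_congr
    (forall_congr' fun y => imp_congr_right fun _ => by
      simp only [zsF, emptyF, succOfF, SF.Eval, Fin.snoc_castSucc, Fin.snoc_last]
      exact zsAux y) (by
      simp only [zsF, emptyF, succOfF, SF.Eval, Fin.snoc_castSucc, Fin.snoc_last]
      exact zsAux x)))

lemma natF_delta0 : natF.IsDelta0 := by
  simp [natF, transF, zsF, emptyF, succOfF, SF.IsDelta0]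

lemma natSucc (hx : NatSem E x) (hs : SuccOf E x s) : NatSem E s := by
  obtain ⟨ht, het, hzs, hz⟩ := hx
  refine ⟨?_, ?_, ?_, Or.inr ⟨x, (hs x).2 (Or.inr rfl), hs⟩⟩
  · intro y hy z hz'
    rcases (hs y).1 hy with hyx | rfl
    · exact (hs z).2 (Or.inl (ht y hyx z hz'))
    · exact (hs z).2 (Or.inl hz')
  · intro y hy
    rcases (hs y).1 hy with hyx | rfl
    · exact het y hyx
    · exact ht
  · intro y hy
    rcases (hs y).1 hy with hyx | rfl
    · exact hzs y hyx
    · exact hz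

lemma natEmpty (hx : ∀ z, ¬ E z x) : NatSem E x :=
  ⟨fun y hy => absurd hy (hx y), fun y hy => absurd hy (hx y),
    fun y hy => absurd hy (hx y), Or.inl hx⟩

lemma natHered (hm : NatSem E m) (hPm : E P m) : NatSem E P := by
  obtain ⟨ht, het, hzs, _⟩ := hm
  exact ⟨het P hPm, fun y hy => het y (ht P hPm y hy),
    fun y hy => hzs y (ht P hPm y hy), hzs P hPm⟩

lemma noSelfMem (hFound : SetFoundationAx E) (hPair : PairAx E) (x : X) : ¬ E x x := by
  intro hxx
  obtain ⟨s, hs⟩ := hPair x x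
  obtain ⟨y, hy, hmin⟩ := hFound s ⟨x, (hs x).2 (Or.inl rfl)⟩
  have hyx : y = x := ((hs y).1 hy).elim id id
  exact hmin x (hyx.symm ▸ hxx) ((hs x).2 (Or.inl rfl))

lemma noPairNat (hFound : SetFoundationAx E) (hPair : PairAx E)
    (hm : NatSem E m) (hPm : E P m) (hps : PSS E P x v) : False := by
  obtain ⟨hAll, ⟨s, hsP, _⟩, _⟩ := hps
  obtain ⟨_, _, _, hz⟩ := natHered hm hPm
  rcases hz with hemp | ⟨z, hzP, hSzP⟩
  · exact hemp s hsP
  · have hxz : E x z := by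
      rcases hAll z hzP with h | h
      · exact h.1
      · exact h.1
    have hxP : E x P := (hSzP x).2 (Or.inl hxz)
    have hxx : E x x := by
      rcases hAll x hxP with h | h
      · exact h.1
      · exact h.1
    exact noSelfMem hFound hPair x hxx

lemma mkPS (hPair : PairAx E) (x v : X) : ∃ P, PSS E P x v := by
  obtain ⟨s1, hs1⟩ := hPair x x
  obtain ⟨s2, hs2⟩ := hPair x v
  obtain ⟨P, hP⟩ := hPair s1 s2
  have hSg : SgS E s1 x := ⟨(hs1 x).2 (Or.inl rfl), fun w hw => ((hs1 w).1 hw).elim id id⟩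
  have hPr : PrS E s2 x v :=
    ⟨(hs2 x).2 (Or.inl rfl), (hs2 v).2 (Or.inr rfl), fun w hw => (hs2 w).1 hw⟩
  refine ⟨P, fun z hz => ?_, ⟨s1, (hP s1).2 (Or.inl rfl), hSg⟩,
    ⟨s2, (hP s2).2 (Or.inr rfl), hPr⟩⟩
  rcases (hP z).1 hz with rfl | rfl
  · exact Or.inl hSg
  · exact Or.inr hPr

lemma pairMemChain (hPair : PairAx E) (hq : IsPair E q m vm) :
    ∃ c, E c q ∧ E vm c := by
  obtain ⟨c, hc⟩ := hPair m vm
  exact ⟨c, (hq c).2 (Or.inr hc), (hc vm).2 (Or.inr rfl)⟩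

/-- `M` proves the existence of (a least inductive set) `ω`, all of whose
elements are von Neumann naturals. -/
lemma omegaEx (hM : ModelM E) :
    ∃ w, IsOmega E w ∧ ∀ m, E m w → NatSem E m := by
  obtain ⟨⟨hExt, hEmp, hPair, hUnion, hDiff, hTCo, hInf, hSep, hFound⟩, hPow⟩ := hM
  obtain ⟨a, hIndA⟩ := hInf
  obtain ⟨w, hw⟩ := hSep 0 natF natF_delta0 (fun i => i.elim0) a
  have hwc : ∀ x, E x w ↔ (E x a ∧ NatSem E x) := by
    intro x; rw [hw x, natF_eval]
  have hwNat : ∀ m, E m w → NatSem E m := fun m hm => ((hwc m).1 hm).2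
  obtain ⟨e, hea, hee⟩ := hIndA.1
  have hInd : InductiveSet E w := by
    constructor
    · exact ⟨e, (hwc e).2 ⟨hea, natEmpty hee⟩, hee⟩
    · intro x hxw
      obtain ⟨s, hsa, hss⟩ := hIndA.2 x ((hwc x).1 hxw).1
      exact ⟨s, (hwc s).2 ⟨hsa, natSucc (hwNat x hxw) hss⟩, hss⟩
  refine ⟨w, ⟨hInd, ?_⟩, hwNat⟩
  intro b hb x hxw
  by_contra hxb
  have hNx := hwNat x hxw
  obtain ⟨sx, hsx⟩ : ∃ sx, SuccOf E x sx := by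
    obtain ⟨s1, hs1⟩ := hPair x x
    obtain ⟨c, hc⟩ := binUnionEx hPair hUnion x s1
    refine ⟨c, fun z => ?_⟩
    rw [hc z]
    constructor
    · rintro (h | h)
      · exact Or.inl h
      · exact Or.inr (((hs1 z).1 h).elim id id)
    · rintro (h | h)
      · exact Or.inl h
      · exact Or.inr (h ▸ (hs1 x).2 (Or.inl rfl))
  obtain ⟨d, hd⟩ := hDiff sx b
  obtain ⟨y, hyd, hmin⟩ := hFound d ⟨x, (hd x).2 ⟨(hsx x).2 (Or.inr rfl), hxb⟩⟩
  obtain ⟨hysx, hyb⟩ := (hd y).1 hyd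
  have hycase : (∀ z, ¬ E z y) ∨ ∃ z, E z y ∧ SuccOf E z y := by
    rcases (hsx y).1 hysx with hyx | rfl
    · exact hNx.2.2.1 y hyx
    · exact hNx.2.2.2
  rcases hycase with hemp | ⟨z, hzy, hSzy⟩
  · obtain ⟨e', he'b, he'e⟩ := hb.1
    have : y = e' := hExt y e' (fun u => ⟨fun h => absurd h (hemp u), fun h => absurd h (he'e u)⟩)
    exact hyb (this ▸ he'b)
  · have hzsx : E z sx := by
      rcases (hsx y).1 hysx with hyx | rfl
      · exact (hsx z).2 (Or.inl (hNx.1 y hyx z hzy))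
      · exact (hsx z).2 (Or.inl hzy)
    have hzb : E z b := by
      by_contra hzb
      exact hmin z hzy ((hd z).2 ⟨hzsx, hzb⟩)
    obtain ⟨s', hs'b, hs'⟩ := hb.2 z hzb
    have : y = s' := hExt y s' (fun u => by rw [hSzy u, hs' u])
    exact hyb (this ▸ hs'b)

end Aux5

section Aux6

variable {E : X → X → Prop}

lemma comp_cs6 {n : ℕ} (v : Fin n → X) (a b c d e f : X) :
    ((Fin.snoc (Fin.snoc (Fin.snoc (Fin.snoc (Fin.snoc (Fin.snoc v a) b) c) d) e) f :
        Fin (n + 6) → X) ∘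
      fun k : Fin n => k.castSucc.castSucc.castSucc.castSucc.castSucc.castSucc) = v := by
  funext k; simp [Function.comp]

lemma comp_cs7 {n : ℕ} (v : Fin n → X) (a b c d e f g : X) :
    ((Fin.snoc (Fin.snoc (Fin.snoc (Fin.snoc (Fin.snoc (Fin.snoc (Fin.snoc v a) b) c) d) e) f) g :
        Fin (n + 7) → X) ∘
      fun k : Fin n => k.castSucc.castSucc.castSucc.castSucc.castSucc.castSucc.castSucc) = v := by
  funext k; simp [Function.comp]

lemma comp_cs8 {n : ℕ} (v : Fin n → X) (a b c d e f g h : X) :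
    ((Fin.snoc (Fin.snoc (Fin.snoc (Fin.snoc (Fin.snoc (Fin.snoc (Fin.snoc (Fin.snoc v a) b) c) d)
        e) f) g) h : Fin (n + 8) → X) ∘
      fun k : Fin n => k.castSucc.castSucc.castSucc.castSucc.castSucc.castSucc.castSucc.castSucc)
      = v := by
  funext k; simp [Function.comp]

/-- "`P` (at index `n`) is a Kuratowski pair `⟨x, v⟩` with `θ(x, v)`". -/
def chiGood {n : ℕ} (θ : SF (n + 2)) : SF (n + 2) :=
  pairScope ((Fin.last n).castSucc)
    (θ.rename (Fin.snoc (Fin.snoc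
      (fun k : Fin n => k.castSucc.castSucc.castSucc.castSucc.castSucc.castSucc)
      ((Fin.last (n + 3)).castSucc.castSucc)) (Fin.last (n + 5))))

lemma chiGood_eval (θ : SF (n + 2)) (p : Fin n → X) (P Q : X) :
    (chiGood θ).Eval E (Fin.snoc (Fin.snoc p P) Q) ↔
      ∃ s, E s P ∧ ∃ x, E x s ∧ ∃ s', E s' P ∧ ∃ y, E y s' ∧
        PSS E P x y ∧ θ.Eval E (Fin.snoc (Fin.snoc p x) y) := by
  simp only [chiGood, pairScope_eval, eval_rename, Fin.comp_snoc, comp_cs6,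
    Fin.snoc_castSucc, Fin.snoc_last]

/-- "`Q` (at index `n+1`) is a good pair whose first component is a member of
the first component of `P`". -/
def chiQ {n : ℕ} (θ : SF (n + 2)) : SF (n + 2) :=
  .bexMem ((Fin.last n).castSucc) <|
    .bexMem (Fin.last (n + 2)) <|
      .and (sgF ((Fin.last (n + 2)).castSucc) (Fin.last (n + 3)))
        (pairScope ((Fin.last (n + 1)).castSucc.castSucc)
          (.and (.mem ((Fin.last (n + 5)).castSucc.castSucc)
              ((Fin.last (n + 3)).castSucc.castSucc.castSucc.castSucc))
            (θ.rename (Fin.snoc (Fin.snoc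
              (fun k : Fin n =>
                k.castSucc.castSucc.castSucc.castSucc.castSucc.castSucc.castSucc.castSucc)
              ((Fin.last (n + 5)).castSucc.castSucc)) (Fin.last (n + 7))))))

lemma chiQ_eval (θ : SF (n + 2)) (p : Fin n → X) (P Q : X) :
    (chiQ θ).Eval E (Fin.snoc (Fin.snoc p P) Q) ↔
      ∃ s, E s P ∧ ∃ x, E x s ∧ (SgS E s x ∧
        ∃ sq, E sq Q ∧ ∃ x', E x' sq ∧ ∃ sq', E sq' Q ∧ ∃ v', E v' sq' ∧
          PSS E Q x' v' ∧ (E x' x ∧ θ.Eval E (Fin.snoc (Fin.snoc p x') v'))) := by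
  simp only [chiQ, SF.Eval, sgF_eval, pairScope_eval, eval_rename, Fin.comp_snoc, comp_cs8,
    PSS, SgS, PrS, Fin.snoc_castSucc, Fin.snoc_last]

def chi {n : ℕ} (θ : SF (n + 2)) : SF (n + 2) := .or (.not (chiGood θ)) (chiQ θ)

lemma chi_delta0P {θ : SF (n + 2)} (hθ : θ.IsDelta0P) : (chi θ).IsDelta0P := by
  refine ⟨?_, ?_⟩
  · exact pairScope_delta0P _ _ (rename_delta0P θ hθ _)
  · exact ⟨sgF_delta0P _ _, pairScope_delta0P _ _ ⟨trivial, rename_delta0P θ hθ _⟩⟩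

/-- The separation formula for the set of first components of good pairs in `U`
(at index `n`), with the separated variable at index `n+1`. -/
def zeta {n : ℕ} (θ : SF (n + 2)) : SF ((n + 1) + 1) :=
  .bexMem ((Fin.last n).castSucc) <|
    pairScope (Fin.last (n + 2))
      (.and (.eq ((Fin.last (n + 4)).castSucc.castSucc)
          ((Fin.last (n + 1)).castSucc.castSucc.castSucc.castSucc.castSucc))
        (θ.rename (Fin.snoc (Fin.snoc
          (fun k : Fin n => k.castSucc.castSucc.castSucc.castSucc.castSucc.castSucc.castSucc)
          ((Fin.last (n + 4)).castSucc.castSucc)) (Fin.last (n + 6)))))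

lemma zeta_eval (θ : SF (n + 2)) (p : Fin n → X) (U x : X) :
    (zeta θ).Eval E (Fin.snoc (Fin.snoc p U) x) ↔
      ∃ P, E P U ∧ ∃ s, E s P ∧ ∃ x1, E x1 s ∧ ∃ s', E s' P ∧ ∃ v1, E v1 s' ∧
        PSS E P x1 v1 ∧ (x1 = x ∧ θ.Eval E (Fin.snoc (Fin.snoc p x1) v1)) := by
  simp only [zeta, SF.Eval, pairScope_eval, eval_rename, Fin.comp_snoc, comp_cs7,
    PSS, SgS, PrS, Fin.snoc_castSucc, Fin.snoc_last]

lemma zeta_delta0P {θ : SF (n + 2)} (hθ : θ.IsDelta0P) : (zeta θ).IsDelta0P :=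
  pairScope_delta0P _ _ ⟨trivial, rename_delta0P θ hθ _⟩

end Aux6

/-- `M + Δ₀^𝒫-WDC_ω` proves `Σ₁^𝒫`-Foundation. -/
theorem sigma1P_foundation_of_WDC (X : Type u) (E : X → X → Prop)
    (hM : ModelM E) (hW : WDComega E) : FoundationScheme E Sigma1PC := by
  intro n φ hφC p hex
  obtain ⟨θ, hθ, rfl⟩ := hφC
  by_contra hcon
  push_neg at hcon
  have hM' := hM
  obtain ⟨⟨hExt, hEmp, hPair, hUnion, hDiff, hTCo, hInf, hSep, hFound⟩, hPow⟩ := hM'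
  obtain ⟨w, hOm, hwNat⟩ := omegaEx hM
  obtain ⟨x0, hx0⟩ := hex
  obtain ⟨v0, hθ0⟩ := hx0
  obtain ⟨b, hbPS⟩ := mkPS hPair x0 v0
  -- the WDC premise for `chi θ`
  have hprem : ∀ P, ∃ Q, (chi θ).Eval E (Fin.snoc (Fin.snoc p P) Q) := by
    intro P
    by_cases hGP : ∃ x v, PSS E P x v ∧ θ.Eval E (Fin.snoc (Fin.snoc p x) v)
    · obtain ⟨x, v, hPS, hθx⟩ := hGP
      have hxpsi : SF.Eval E (SF.ex θ) (Fin.snoc p x) := ⟨v, hθx⟩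
      obtain ⟨x', hx'x, hx'psi⟩ := hcon x hxpsi
      obtain ⟨v', hθ'⟩ := hx'psi
      obtain ⟨Q, hQ⟩ := mkPS hPair x' v'
      refine ⟨Q, Or.inr ?_⟩
      rw [chiQ_eval]
      obtain ⟨s, hsP, hSg⟩ := hPS.2.1
      obtain ⟨sq, hsqQ, hSgq⟩ := hQ.2.1
      obtain ⟨sq', hsq'Q, hPrq⟩ := hQ.2.2
      exact ⟨s, hsP, x, hSg.1, hSg, sq, hsqQ, x', hSgq.1, sq', hsq'Q, v', hPrq.2.1,
        hQ, hx'x, hθ'⟩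
    · refine ⟨P, Or.inl ?_⟩
      intro hg
      rw [chiGood_eval] at hg
      obtain ⟨s, _, x, _, s', _, y, _, hPSS, hθxy⟩ := hg
      exact hGP ⟨x, y, hPSS, hθxy⟩
  obtain ⟨f, hfFun, hfZero, hfStep⟩ := hW n (chi θ) (chi_delta0P hθ) p hprem w hOm b
  -- `U = ⋃³ f` and a transitive `t ⊇ U`
  obtain ⟨u1, hu1⟩ := hUnion f
  obtain ⟨u2, hu2⟩ := hUnion u1
  obtain ⟨U, hU⟩ := hUnion u2
  obtain ⟨t, htTrans, htSub⟩ := hTCo U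
  have hUmem : ∀ q c vm P, E q f → E c q → E vm c → E P vm → E P U := by
    intro q c vm P hq hc hvm hP
    exact (hU P).2 ⟨vm, (hu2 vm).2 ⟨c, (hu1 c).2 ⟨q, hq, hc⟩, hvm⟩, hP⟩
  -- the set `z` of first components of good pairs occurring in `U`
  obtain ⟨z, hz⟩ := sepP hM (n + 1) (zeta θ) (zeta_delta0P hθ) (Fin.snoc p U) t
  have hzMem : ∀ x, E x z ↔ E x t ∧
      ∃ P, E P U ∧ ∃ v1, PSS E P x v1 ∧ θ.Eval E (Fin.snoc (Fin.snoc p x) v1) := by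
    intro x
    rw [hz x, zeta_eval]
    constructor
    · rintro ⟨hxt, P, hPU, s, _, x1, _, s', _, v1, _, hPSS, rfl, hθx⟩
      exact ⟨hxt, P, hPU, v1, hPSS, hθx⟩
    · rintro ⟨hxt, P, hPU, v1, hPSS, hθx⟩
      obtain ⟨s, hsP, hSg⟩ := hPSS.2.1
      obtain ⟨s', hs'P, hPr⟩ := hPSS.2.2
      exact ⟨hxt, P, hPU, s, hsP, x, hSg.1, s', hs'P, v1, hPr.2.1, hPSS, rfl, hθx⟩
  -- `z` is nonempty
  have hbU : E b U := by
    obtain ⟨z0, v00, _, _, ⟨q, hqf, hqP⟩, hv00⟩ := hfZero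
    obtain ⟨c, hcq, hvc⟩ := pairMemChain hPair hqP
    exact hUmem q c v00 b hqf hcq hvc ((hv00 b).2 rfl)
  have hx0z : E x0 z := by
    obtain ⟨s, hsb, hSg⟩ := hbPS.2.1
    have hbt : E b t := htSub b hbU
    have hst : E s t := htTrans b hbt s hsb
    exact (hzMem x0).2 ⟨htTrans s hst x0 hSg.1, b, hbU, v0, hbPS, hθ0⟩
  -- every element of `z` has an element in `z`
  have hdesc : ∀ x, E x z → ∃ x', E x' x ∧ E x' z := by
    intro x hxz
    obtain ⟨hxt, P, hPU, v1, hPS, hθx⟩ := (hzMem x).1 hxz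
    obtain ⟨c2, hc2u2, hPc2⟩ := (hU P).1 hPU
    obtain ⟨c1, hc1u1, hc2c1⟩ := (hu2 c2).1 hc2u2
    obtain ⟨q, hqf, hc1q⟩ := (hu1 c1).1 hc1u1
    obtain ⟨m, vm, hqP, hmw⟩ := hfFun.1 q hqf
    have hc2cases : c2 = m ∨ c2 = vm := by
      rcases (hqP c1).1 hc1q with hd1 | hd2
      · exact Or.inl ((hd1 c2).1 hc2c1)
      · exact (hd2 c2).1 hc2c1
    rcases hc2cases with rfl | rfl
    · exact absurd hPS (noPairNat hFound hPair (hwNat c2 hmw) hPc2)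
    · obtain ⟨m', hm'w, hSmm'⟩ := hOm.1.2 m hmw
      obtain ⟨vm', hvm'⟩ := hfFun.2.2 m' hm'w
      have hFm : FunApp E f m c2 := ⟨q, hqf, hqP⟩
      obtain ⟨h1, _⟩ := hfStep m m' c2 vm' hmw hSmm' hm'w hFm hvm'
      obtain ⟨Q, hQvm', hchiPQ⟩ := h1 P hPc2
      have hGoodP : (chiGood θ).Eval E (Fin.snoc (Fin.snoc p P) Q) := by
        rw [chiGood_eval]
        obtain ⟨s, hsP, hSg⟩ := hPS.2.1
        obtain ⟨s', hs'P, hPr⟩ := hPS.2.2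
        exact ⟨s, hsP, x, hSg.1, s', hs'P, v1, hPr.2.1, hPS, hθx⟩
      rcases hchiPQ with hnot | hq
      · exact absurd hGoodP hnot
      · rw [chiQ_eval] at hq
        obtain ⟨s2, hs2P, x2, hx2s2, hSgs2, sq, hsqQ, x', hx'sq, sq', hsq'Q, v', hv'sq',
          hPSQ, hx'x2, hθ'⟩ := hq
        have hx2x : x2 = x := by
          rcases hPS.1 s2 hs2P with hSgx | hPrx
          · exact hSgx.2 x2 hx2s2
          · exact (hSgs2.2 x hPrx.1).symm
        obtain ⟨q', hq'f, hq'P⟩ := hvm'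
        obtain ⟨c', hc'q', hvm'c'⟩ := pairMemChain hPair hq'P
        have hQU : E Q U := hUmem q' c' vm' Q hq'f hc'q' hvm'c' hQvm'
        have hQt : E Q t := htSub Q hQU
        have hx't : E x' t := htTrans sq (htTrans Q hQt sq hsqQ) x' hx'sq
        have hx'z : E x' z := (hzMem x').2 ⟨hx't, Q, hQU, v', hPSQ, hθ'⟩
        exact ⟨x', hx2x ▸ hx'x2, hx'z⟩
  obtain ⟨y, hyz, hymin⟩ := hFound z ⟨x0, hx0z⟩
  obtain ⟨x', hx'y, hx'z⟩ := hdesc y hyz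
  exact hymin x' hx'y hx'z
end

section
/- Let M and N be models of KP^P with N a blunt rank extension of M. Then M satisfies full Separation (Π∞-Separation): for every formula φ(x, z⃗) of the language of set theory and all parameters from M, and every w ∈ M, there is y ∈ M whose elements are exactly the elements x of w in M satisfying φ(x, z⃗) in M. -/
universe u

variable {X : Type u}

section PartA
variable {X : Type u}

lemma snoc_insertNth (m : ℕ) (k : Fin (m+1)) (v : X) (q : Fin m → X) (x : X) :
    Fin.snoc (α := fun _ => X) (Fin.insertNth (α := fun _ => X) k v q) x
      = Fin.insertNth (α := fun _ => X) k.castSucc v (Fin.snoc (α := fun _ => X) q x) := by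
  funext i
  refine Fin.succAboveCases k.castSucc ?_ (fun j => ?_) i
  · rw [Fin.insertNth_apply_same]
    have : (k.castSucc : Fin (m+2)) = Fin.castSucc k := rfl
    rw [this, Fin.snoc_castSucc, Fin.insertNth_apply_same]
  · rw [Fin.insertNth_apply_succAbove]
    refine Fin.lastCases ?_ (fun j' => ?_) j
    · have h : (k.castSucc).succAbove (Fin.last m) = Fin.last (m+1) := by
        rw [Fin.succAbove_of_le_castSucc]
        · rfl
        · simp [Fin.le_def]; omega
      rw [h, Fin.snoc_last, Fin.snoc_last]
    · rw [Fin.castSucc_succAbove_castSucc, Fin.snoc_castSucc, Fin.snoc_castSucc,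
        Fin.insertNth_apply_succAbove]

end PartA

section PartB
variable {X : Type u}

/-- `var i ⊆ var j` as a `Δ₀` formula. -/
def sfSub {m : ℕ} (i j : Fin m) : SF m := .ballMem i (.mem (Fin.last m) j.castSucc)

lemma sfSub_delta0 {m : ℕ} (i j : Fin m) : (sfSub i j).IsDelta0 := by
  simp [sfSub, SF.IsDelta0]

lemma sfSub_eval {m : ℕ} (E : X → X → Prop) (i j : Fin m) (w : Fin m → X) :
    (sfSub i j).Eval E w ↔ SubE E (w i) (w j) := by
  simp [sfSub, SF.Eval, SubE, Fin.snoc_last, Fin.snoc_castSucc]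

/-- Relativization of an arbitrary formula to the extension of the variable at
position `k` (inserted among the variables), turning it into a `Δ₀` formula. -/
def relv : {m : ℕ} → SF m → Fin (m+1) → SF (m+1)
  | _, .mem i j, k => .mem (k.succAbove i) (k.succAbove j)
  | _, .eq i j, k => .eq (k.succAbove i) (k.succAbove j)
  | _, .not φ, k => .not (relv φ k)
  | _, .and φ ψ, k => .and (relv φ k) (relv ψ k)
  | _, .or φ ψ, k => .or (relv φ k) (relv ψ k)
  | _, .bexMem i φ, k => .bexMem (k.succAbove i) (relv φ k.castSucc)
  | m, .bexSub i φ, k =>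
      .bexMem k (.and (sfSub (Fin.last (m+1)) ((k.succAbove i).castSucc)) (relv φ k.castSucc))
  | _, .ballMem i φ, k => .ballMem (k.succAbove i) (relv φ k.castSucc)
  | m, .ballSub i φ, k =>
      .ballMem k (.or (.not (sfSub (Fin.last (m+1)) ((k.succAbove i).castSucc)))
        (relv φ k.castSucc))
  | _, .ex φ, k => .bexMem k (relv φ k.castSucc)
  | _, .all φ, k => .ballMem k (relv φ k.castSucc)

lemma relv_delta0 : ∀ {m : ℕ} (φ : SF m) (k : Fin (m+1)), (relv φ k).IsDelta0 := by
  intro m φ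
  induction φ with
  | mem i j => intro k; trivial
  | eq i j => intro k; trivial
  | not φ ih => intro k; exact ih k
  | and φ ψ ih ih' => intro k; exact ⟨ih k, ih' k⟩
  | or φ ψ ih ih' => intro k; exact ⟨ih k, ih' k⟩
  | bexMem i φ ih => intro k; exact ih k.castSucc
  | ballMem i φ ih => intro k; exact ih k.castSucc
  | bexSub i φ ih => intro k; exact ⟨sfSub_delta0 _ _, ih k.castSucc⟩
  | ballSub i φ ih => intro k; exact ⟨sfSub_delta0 _ _, ih k.castSucc⟩
  | ex φ ih => intro k; exact ih k.castSucc
  | all φ ih => intro k; exact ih k.castSucc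

end PartB

section PartB2
variable {X : Type u} {E : X → X → Prop} {A : Set X} {v : X}

lemma subE_restrict (hend : ∀ x y, y ∈ A → E x y → x ∈ A)
    (x y : A) : SubE (restrict E A) x y ↔ SubE E (x : X) (y : X) := by
  constructor
  · intro h z hz
    have hzA : z ∈ A := hend z x x.2 hz
    exact h ⟨z, hzA⟩ hz
  · intro h z hz
    exact h z hz

lemma relv_eval (hv : ∀ x, E x v ↔ x ∈ A) (hend : ∀ x y, y ∈ A → E x y → x ∈ A) :
    ∀ {m : ℕ} (φ : SF m) (k : Fin (m+1)) (q : Fin m → A),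
      (relv φ k).Eval E (Fin.insertNth k v (fun i => ((q i : X)))) ↔
        SF.Eval (restrict E A) φ q := by
  intro m φ
  induction φ with
  | mem i j =>
      intro k q
      simp [relv, SF.Eval, Fin.insertNth_apply_succAbove, restrict]
  | eq i j =>
      intro k q
      simp only [relv, SF.Eval, Fin.insertNth_apply_succAbove]
      exact ⟨fun h => Subtype.ext h, fun h => congrArg _ h⟩
  | not φ ih => intro k q; simp only [relv, SF.Eval]; rw [ih k q]
  | and φ ψ ih ih' => intro k q; simp only [relv, SF.Eval]; rw [ih k q, ih' k q]
  | or φ ψ ih ih' => intro k q; simp only [relv, SF.Eval]; rw [ih k q, ih' k q]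
  | bexMem i φ ih =>
      intro k q
      simp only [relv, SF.Eval, Fin.insertNth_apply_succAbove]
      constructor
      · rintro ⟨x, hx, hφ⟩
        have hxA : x ∈ A := hend x _ (q i).2 hx
        refine ⟨⟨x, hxA⟩, hx, ?_⟩
        rw [← ih k.castSucc (Fin.snoc q ⟨x, hxA⟩)]
        rw [snoc_insertNth] at hφ
        convert hφ using 2
        rw [show (fun i => ((Fin.snoc (α := fun _ => A) q ⟨x, hxA⟩ i : X))) =
          Fin.snoc (α := fun _ => X) (fun i => ((q i : X))) x from Fin.comp_snoc Subtype.val q ⟨x, hxA⟩]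
      · rintro ⟨x, hx, hφ⟩
        refine ⟨(x : X), hx, ?_⟩
        rw [snoc_insertNth]
        rw [← ih k.castSucc (Fin.snoc q x)] at hφ
        convert hφ using 2
        rw [show (fun i => ((Fin.snoc (α := fun _ => A) q x i : X))) =
          Fin.snoc (α := fun _ => X) (fun i => ((q i : X))) (x : X) from Fin.comp_snoc Subtype.val q x]
  | ballMem i φ ih =>
      intro k q
      simp only [relv, SF.Eval, Fin.insertNth_apply_succAbove]
      constructor
      · rintro h x hx
        have hφ := h (x : X) hx
        rw [snoc_insertNth] at hφ
        rw [← ih k.castSucc (Fin.snoc q x)]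
        convert hφ using 2
        rw [show (fun i => ((Fin.snoc (α := fun _ => A) q x i : X))) =
          Fin.snoc (α := fun _ => X) (fun i => ((q i : X))) (x : X) from Fin.comp_snoc Subtype.val q x]
      · rintro h x hx
        have hxA : x ∈ A := hend x _ (q i).2 hx
        have hφ := h ⟨x, hxA⟩ hx
        rw [← ih k.castSucc (Fin.snoc q ⟨x, hxA⟩)] at hφ
        rw [snoc_insertNth]
        convert hφ using 2
        rw [show (fun i => ((Fin.snoc (α := fun _ => A) q ⟨x, hxA⟩ i : X))) =
          Fin.snoc (α := fun _ => X) (fun i => ((q i : X))) x from Fin.comp_snoc Subtype.val q ⟨x, hxA⟩]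
  | bexSub i φ ih =>
      intro k q
      simp only [relv, SF.Eval, Fin.insertNth_apply_same]
      constructor
      · rintro ⟨x, hxv, hsub, hφ⟩
        have hxA : x ∈ A := (hv x).1 hxv
        simp only [sfSub_eval, Fin.snoc_last, Fin.snoc_castSucc, Fin.insertNth_apply_succAbove] at hsub
        refine ⟨⟨x, hxA⟩, ?_, ?_⟩
        · exact (subE_restrict hend _ _).2 hsub
        · rw [← ih k.castSucc (Fin.snoc q ⟨x, hxA⟩)]
          rw [snoc_insertNth] at hφ
          convert hφ using 2
          rw [show (fun i => ((Fin.snoc (α := fun _ => A) q ⟨x, hxA⟩ i : X))) =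
            Fin.snoc (α := fun _ => X) (fun i => ((q i : X))) x from Fin.comp_snoc Subtype.val q ⟨x, hxA⟩]
      · rintro ⟨x, hsub, hφ⟩
        refine ⟨(x : X), (hv _).2 x.2, ?_, ?_⟩
        · simp only [sfSub_eval, Fin.snoc_last, Fin.snoc_castSucc, Fin.insertNth_apply_succAbove]
          exact fun z hz => (subE_restrict hend _ _).1 hsub z hz
        · rw [snoc_insertNth]
          rw [← ih k.castSucc (Fin.snoc q x)] at hφ
          convert hφ using 2
          rw [show (fun i => ((Fin.snoc (α := fun _ => A) q x i : X))) =
            Fin.snoc (α := fun _ => X) (fun i => ((q i : X))) (x : X) from Fin.comp_snoc Subtype.val q x]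
  | ballSub i φ ih =>
      intro k q
      simp only [relv, SF.Eval, Fin.insertNth_apply_same]
      constructor
      · rintro h x hsub
        have hx := h (x : X) ((hv _).2 x.2)
        rcases hx with hns | hφ
        · exfalso
          apply hns
          simp only [sfSub_eval, Fin.snoc_last, Fin.snoc_castSucc, Fin.insertNth_apply_succAbove]
          exact fun z hz => (subE_restrict hend _ _).1 hsub z hz
        · rw [← ih k.castSucc (Fin.snoc q x)]
          rw [snoc_insertNth] at hφ
          convert hφ using 2
          rw [show (fun i => ((Fin.snoc (α := fun _ => A) q x i : X))) =
            Fin.snoc (α := fun _ => X) (fun i => ((q i : X))) (x : X) from Fin.comp_snoc Subtype.val q x]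
      · rintro h x hxv
        have hxA : x ∈ A := (hv x).1 hxv
        by_cases hs : SubE E x ((q i : X))
        · right
          have hφ := h ⟨x, hxA⟩ ((subE_restrict hend _ _).2 hs)
          rw [← ih k.castSucc (Fin.snoc q ⟨x, hxA⟩)] at hφ
          rw [snoc_insertNth]
          convert hφ using 2
          rw [show (fun i => ((Fin.snoc (α := fun _ => A) q ⟨x, hxA⟩ i : X))) =
            Fin.snoc (α := fun _ => X) (fun i => ((q i : X))) x from Fin.comp_snoc Subtype.val q ⟨x, hxA⟩]
        · left
          intro hsub
          apply hs
          simp only [sfSub_eval, Fin.snoc_last, Fin.snoc_castSucc, Fin.insertNth_apply_succAbove] at hsub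
          exact hsub
  | ex φ ih =>
      intro k q
      simp only [relv, SF.Eval, Fin.insertNth_apply_same]
      constructor
      · rintro ⟨x, hxv, hφ⟩
        have hxA : x ∈ A := (hv x).1 hxv
        refine ⟨⟨x, hxA⟩, ?_⟩
        rw [← ih k.castSucc (Fin.snoc q ⟨x, hxA⟩)]
        rw [snoc_insertNth] at hφ
        convert hφ using 2
        rw [show (fun i => ((Fin.snoc (α := fun _ => A) q ⟨x, hxA⟩ i : X))) =
          Fin.snoc (α := fun _ => X) (fun i => ((q i : X))) x from Fin.comp_snoc Subtype.val q ⟨x, hxA⟩]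
      · rintro ⟨x, hφ⟩
        refine ⟨(x : X), (hv _).2 x.2, ?_⟩
        rw [snoc_insertNth]
        rw [← ih k.castSucc (Fin.snoc q x)] at hφ
        convert hφ using 2
        rw [show (fun i => ((Fin.snoc (α := fun _ => A) q x i : X))) =
          Fin.snoc (α := fun _ => X) (fun i => ((q i : X))) (x : X) from Fin.comp_snoc Subtype.val q x]
  | all φ ih =>
      intro k q
      simp only [relv, SF.Eval, Fin.insertNth_apply_same]
      constructor
      · rintro h x
        have hφ := h (x : X) ((hv _).2 x.2)
        rw [← ih k.castSucc (Fin.snoc q x)]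
        rw [snoc_insertNth] at hφ
        convert hφ using 2
        rw [show (fun i => ((Fin.snoc (α := fun _ => A) q x i : X))) =
          Fin.snoc (α := fun _ => X) (fun i => ((q i : X))) (x : X) from Fin.comp_snoc Subtype.val q x]
      · rintro h x hxv
        have hxA : x ∈ A := (hv x).1 hxv
        have hφ := h ⟨x, hxA⟩
        rw [← ih k.castSucc (Fin.snoc q ⟨x, hxA⟩)] at hφ
        rw [snoc_insertNth]
        convert hφ using 2
        rw [show (fun i => ((Fin.snoc (α := fun _ => A) q ⟨x, hxA⟩ i : X))) =
          Fin.snoc (α := fun _ => X) (fun i => ((q i : X))) x from Fin.comp_snoc Subtype.val q ⟨x, hxA⟩]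

end PartB2

section PartC0
variable {X : Type u}

/-- Extend a renaming under a binder. -/
def extRen {n k : ℕ} (ρ : Fin n → Fin k) : Fin (n+1) → Fin (k+1) :=
  Fin.snoc (fun i => (ρ i).castSucc) (Fin.last k)

/-- Rename the variables of a formula. -/
def SF.ren : {n k : ℕ} → (Fin n → Fin k) → SF n → SF k
  | _, _, ρ, .mem i j => .mem (ρ i) (ρ j)
  | _, _, ρ, .eq i j => .eq (ρ i) (ρ j)
  | _, _, ρ, .not φ => .not (φ.ren ρ)
  | _, _, ρ, .and φ ψ => .and (φ.ren ρ) (ψ.ren ρ)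
  | _, _, ρ, .or φ ψ => .or (φ.ren ρ) (ψ.ren ρ)
  | _, _, ρ, .bexMem i φ => .bexMem (ρ i) (φ.ren (extRen ρ))
  | _, _, ρ, .ballMem i φ => .ballMem (ρ i) (φ.ren (extRen ρ))
  | _, _, ρ, .bexSub i φ => .bexSub (ρ i) (φ.ren (extRen ρ))
  | _, _, ρ, .ballSub i φ => .ballSub (ρ i) (φ.ren (extRen ρ))
  | _, _, ρ, .ex φ => .ex (φ.ren (extRen ρ))
  | _, _, ρ, .all φ => .all (φ.ren (extRen ρ))

lemma comp_extRen {n k : ℕ} (ρ : Fin n → Fin k) (w : Fin k → X) (x : X) :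
    (Fin.snoc (α := fun _ => X) w x) ∘ (extRen ρ) = Fin.snoc (α := fun _ => X) (w ∘ ρ) x := by
  funext i
  refine Fin.lastCases ?_ (fun j => ?_) i
  · simp [extRen]
  · simp [extRen]

lemma ren_eval (E : X → X → Prop) :
    ∀ {n : ℕ} (φ : SF n) {k : ℕ} (ρ : Fin n → Fin k) (w : Fin k → X),
      (φ.ren ρ).Eval E w ↔ φ.Eval E (w ∘ ρ) := by
  intro n φ
  induction φ with
  | mem i j => intro k ρ w; simp [SF.ren, SF.Eval]; try rfl
  | eq i j => intro k ρ w; simp [SF.ren, SF.Eval]; try rfl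
  | not φ ih => intro k ρ w; simp only [SF.ren, SF.Eval]; rw [ih]
  | and φ ψ ih ih' => intro k ρ w; simp only [SF.ren, SF.Eval]; rw [ih, ih']
  | or φ ψ ih ih' => intro k ρ w; simp only [SF.ren, SF.Eval]; rw [ih, ih']
  | bexMem i φ ih =>
      intro k ρ w; simp only [SF.ren, SF.Eval]
      exact exists_congr fun x => and_congr Iff.rfl (by rw [ih, comp_extRen])
  | ballMem i φ ih =>
      intro k ρ w; simp only [SF.ren, SF.Eval]
      exact forall_congr' fun x => imp_congr Iff.rfl (by rw [ih, comp_extRen])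
  | bexSub i φ ih =>
      intro k ρ w; simp only [SF.ren, SF.Eval]
      exact exists_congr fun x => and_congr Iff.rfl (by rw [ih, comp_extRen])
  | ballSub i φ ih =>
      intro k ρ w; simp only [SF.ren, SF.Eval]
      exact forall_congr' fun x => imp_congr Iff.rfl (by rw [ih, comp_extRen])
  | ex φ ih =>
      intro k ρ w; simp only [SF.ren, SF.Eval]
      exact exists_congr fun x => by rw [ih, comp_extRen]
  | all φ ih =>
      intro k ρ w; simp only [SF.ren, SF.Eval]
      exact forall_congr' fun x => by rw [ih, comp_extRen]

lemma ren_delta0 : ∀ {n : ℕ} (φ : SF n) {k : ℕ} (ρ : Fin n → Fin k),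
    φ.IsDelta0 → (φ.ren ρ).IsDelta0 := by
  intro n φ
  induction φ with
  | mem i j => intro k ρ h; trivial
  | eq i j => intro k ρ h; trivial
  | not φ ih => intro k ρ h; exact ih _ h
  | and φ ψ ih ih' => intro k ρ h; exact ⟨ih _ h.1, ih' _ h.2⟩
  | or φ ψ ih ih' => intro k ρ h; exact ⟨ih _ h.1, ih' _ h.2⟩
  | bexMem i φ ih => intro k ρ h; exact ih _ h
  | ballMem i φ ih => intro k ρ h; exact ih _ h
  | bexSub i φ ih => intro k ρ h; exact h.elim
  | ballSub i φ ih => intro k ρ h; exact h.elim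
  | ex φ ih => intro k ρ h; exact h.elim
  | all φ ih => intro k ρ h; exact h.elim

lemma ren_delta0P : ∀ {n : ℕ} (φ : SF n) {k : ℕ} (ρ : Fin n → Fin k),
    φ.IsDelta0P → (φ.ren ρ).IsDelta0P := by
  intro n φ
  induction φ with
  | mem i j => intro k ρ h; trivial
  | eq i j => intro k ρ h; trivial
  | not φ ih => intro k ρ h; exact ih _ h
  | and φ ψ ih ih' => intro k ρ h; exact ⟨ih _ h.1, ih' _ h.2⟩
  | or φ ψ ih ih' => intro k ρ h; exact ⟨ih _ h.1, ih' _ h.2⟩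
  | bexMem i φ ih => intro k ρ h; exact ih _ h
  | ballMem i φ ih => intro k ρ h; exact ih _ h
  | bexSub i φ ih => intro k ρ h; exact ih _ h
  | ballSub i φ ih => intro k ρ h; exact ih _ h
  | ex φ ih => intro k ρ h; exact h.elim
  | all φ ih => intro k ρ h; exact h.elim

lemma delta0_delta0P : ∀ {n : ℕ} (φ : SF n), φ.IsDelta0 → φ.IsDelta0P := by
  intro n φ
  induction φ with
  | mem i j => intro h; trivial
  | eq i j => intro h; trivial
  | not φ ih => intro h; exact ih h
  | and φ ψ ih ih' => intro h; exact ⟨ih h.1, ih' h.2⟩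
  | or φ ψ ih ih' => intro h; exact ⟨ih h.1, ih' h.2⟩
  | bexMem i φ ih => intro h; exact ih h
  | ballMem i φ ih => intro h; exact ih h
  | bexSub i φ ih => intro h; exact h.elim
  | ballSub i φ ih => intro h; exact h.elim
  | ex φ ih => intro h; exact h.elim
  | all φ ih => intro h; exact h.elim

end PartC0

section EvalSimp
variable {X : Type u} {E : X → X → Prop}

lemma eval_mem {m : ℕ} (i j : Fin m) (v : Fin m → X) :
    (SF.mem i j).Eval E v ↔ E (v i) (v j) := Iff.rfl
lemma eval_eq {m : ℕ} (i j : Fin m) (v : Fin m → X) :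
    (SF.eq i j).Eval E v ↔ v i = v j := Iff.rfl
lemma eval_not {m : ℕ} (φ : SF m) (v : Fin m → X) :
    (SF.not φ).Eval E v ↔ ¬ φ.Eval E v := Iff.rfl
lemma eval_and {m : ℕ} (φ ψ : SF m) (v : Fin m → X) :
    (SF.and φ ψ).Eval E v ↔ (φ.Eval E v ∧ ψ.Eval E v) := Iff.rfl
lemma eval_or {m : ℕ} (φ ψ : SF m) (v : Fin m → X) :
    (SF.or φ ψ).Eval E v ↔ (φ.Eval E v ∨ ψ.Eval E v) := Iff.rfl
lemma eval_bexMem {m : ℕ} (i : Fin m) (φ : SF (m+1)) (v : Fin m → X) :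
    (SF.bexMem i φ).Eval E v ↔ ∃ x, E x (v i) ∧ φ.Eval E (Fin.snoc v x) := Iff.rfl
lemma eval_ballMem {m : ℕ} (i : Fin m) (φ : SF (m+1)) (v : Fin m → X) :
    (SF.ballMem i φ).Eval E v ↔ ∀ x, E x (v i) → φ.Eval E (Fin.snoc v x) := Iff.rfl
lemma eval_bexSub {m : ℕ} (i : Fin m) (φ : SF (m+1)) (v : Fin m → X) :
    (SF.bexSub i φ).Eval E v ↔ ∃ x, SubE E x (v i) ∧ φ.Eval E (Fin.snoc v x) := Iff.rfl
lemma eval_ballSub {m : ℕ} (i : Fin m) (φ : SF (m+1)) (v : Fin m → X) :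
    (SF.ballSub i φ).Eval E v ↔ ∀ x, SubE E x (v i) → φ.Eval E (Fin.snoc v x) := Iff.rfl


end EvalSimp

section PartC1
variable {X : Type u}

def sfImp {m : ℕ} (φ ψ : SF m) : SF m := .or (.not φ) ψ

lemma sfImp_eval (E : X → X → Prop) {m : ℕ} (φ ψ : SF m) (w : Fin m → X) :
    (sfImp φ ψ).Eval E w ↔ (φ.Eval E w → ψ.Eval E w) := by
  simp [sfImp, SF.Eval]; tauto

lemma sfImp_delta0 {m : ℕ} {φ ψ : SF m} (h : φ.IsDelta0) (h' : ψ.IsDelta0) :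
    (sfImp φ ψ).IsDelta0 := ⟨h, h'⟩

lemma sfImp_delta0P {m : ℕ} {φ ψ : SF m} (h : φ.IsDelta0P) (h' : ψ.IsDelta0P) :
    (sfImp φ ψ).IsDelta0P := ⟨h, h'⟩

/-- `ext(var z) = {var a}`. -/
def sfSing {m : ℕ} (z a : Fin m) : SF m :=
  .and (.ballMem z (.eq (Fin.last m) a.castSucc)) (.mem a z)

lemma sfSing_eval (E : X → X → Prop) {m : ℕ} (z a : Fin m) (w : Fin m → X) :
    (sfSing z a).Eval E w ↔ ∀ t, E t (w z) ↔ t = w a := by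
  simp only [sfSing, SF.Eval, Fin.snoc_last, Fin.snoc_castSucc]
  exact ⟨fun ⟨h1, h2⟩ t => ⟨h1 t, fun e => e ▸ h2⟩, fun h => ⟨fun t ht => (h t).1 ht, (h _).2 rfl⟩⟩

lemma sing_char (E : X → X → Prop) (z a : X) :
    ((∀ x, E x z → x = a) ∧ E a z) ↔ (∀ t, E t z ↔ t = a) :=
  ⟨fun ⟨h1, h2⟩ t => ⟨h1 t, fun e => e ▸ h2⟩, fun h => ⟨fun t ht => (h t).1 ht, (h _).2 rfl⟩⟩

lemma upair_char (E : X → X → Prop) (z a b : X) :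
    ((∀ x, E x z → x = a ∨ x = b) ∧ E a z ∧ E b z) ↔ (∀ t, E t z ↔ (t = a ∨ t = b)) :=
  ⟨fun ⟨h1, h2, h3⟩ t => ⟨h1 t, fun e => e.elim (fun e => e ▸ h2) (fun e => e ▸ h3)⟩,
    fun h => ⟨fun t ht => (h t).1 ht, (h _).2 (Or.inl rfl), (h _).2 (Or.inr rfl)⟩⟩

lemma sfSing_delta0 {m : ℕ} (z a : Fin m) : (sfSing z a).IsDelta0 := by
  simp [sfSing, SF.IsDelta0]

/-- `ext(var z) = {var a, var b}`. -/
def sfUPair {m : ℕ} (z a b : Fin m) : SF m :=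
  .and (.ballMem z (.or (.eq (Fin.last m) a.castSucc) (.eq (Fin.last m) b.castSucc)))
    (.and (.mem a z) (.mem b z))

lemma sfUPair_eval (E : X → X → Prop) {m : ℕ} (z a b : Fin m) (w : Fin m → X) :
    (sfUPair z a b).Eval E w ↔ ∀ t, E t (w z) ↔ (t = w a ∨ t = w b) := by
  simp only [sfUPair, SF.Eval, Fin.snoc_last, Fin.snoc_castSucc]
  constructor
  · rintro ⟨h1, h2, h3⟩ t
    exact ⟨h1 t, fun e => e.elim (fun e => e ▸ h2) (fun e => e ▸ h3)⟩
  · intro h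
    exact ⟨fun t ht => (h t).1 ht, (h _).2 (Or.inl rfl), (h _).2 (Or.inr rfl)⟩

lemma sfUPair_delta0 {m : ℕ} (z a b : Fin m) : (sfUPair z a b).IsDelta0 := by
  simp [sfUPair, SF.IsDelta0]

/-- `var p` is the Kuratowski pair `⟨var a, var b⟩`. -/
def sfKPair {m : ℕ} (p a b : Fin m) : SF m :=
  .and (.ballMem p (.or (sfSing (Fin.last m) a.castSucc) (sfUPair (Fin.last m) a.castSucc b.castSucc)))
    (.and (.bexMem p (sfSing (Fin.last m) a.castSucc))
      (.bexMem p (sfUPair (Fin.last m) a.castSucc b.castSucc)))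

lemma sfKPair_delta0 {m : ℕ} (p a b : Fin m) : (sfKPair p a b).IsDelta0 := by
  simp [sfKPair, sfSing, sfUPair, SF.IsDelta0]

lemma kpair_char {E : X → X → Prop} (hext : ExtensionalityAx E) (hpair : PairAx E)
    (p a b : X) :
    ((∀ z, E z p → ((∀ t, E t z ↔ t = a) ∨ (∀ t, E t z ↔ (t = a ∨ t = b)))) ∧
     (∃ z, E z p ∧ ∀ t, E t z ↔ t = a) ∧
     (∃ z, E z p ∧ ∀ t, E t z ↔ (t = a ∨ t = b))) ↔ IsPair E p a b := by
  constructor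
  · rintro ⟨h1, ⟨s, hs, hsing⟩, ⟨t, ht, hup⟩⟩ z
    constructor
    · exact h1 z
    · rintro (hz | hz)
      · have : z = s := hext z s (fun y => (hz y).trans (hsing y).symm)
        exact this ▸ hs
      · have : z = t := hext z t (fun y => (hz y).trans (hup y).symm)
        exact this ▸ ht
  · intro hP
    refine ⟨fun z hz => (hP z).1 hz, ?_, ?_⟩
    · obtain ⟨s, hs⟩ := hpair a a
      refine ⟨s, (hP s).2 (Or.inl fun t => (hs t).trans (or_self_iff)), fun t => (hs t).trans (or_self_iff)⟩
    · obtain ⟨s, hs⟩ := hpair a b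
      exact ⟨s, (hP s).2 (Or.inr fun t => hs t), fun t => hs t⟩

lemma sfKPair_eval {E : X → X → Prop} (hext : ExtensionalityAx E) (hpair : PairAx E)
    {m : ℕ} (p a b : Fin m) (w : Fin m → X) :
    (sfKPair p a b).Eval E w ↔ IsPair E (w p) (w a) (w b) := by
  simp only [sfKPair, sfSing, sfUPair, SF.Eval, Fin.snoc_last, Fin.snoc_castSucc]
  simp only [sing_char, upair_char]
  exact kpair_char hext hpair _ _ _

lemma eval_sfImp {E : X → X → Prop} {m : ℕ} (φ ψ : SF m) (v : Fin m → X) :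
    (sfImp φ ψ).Eval E v ↔ (φ.Eval E v → ψ.Eval E v) := by
  show (¬ _ ∨ _) ↔ _
  tauto

end PartC1

section PartC2
variable {X : Type u}

def rho3 {m : ℕ} : Fin (m+1) → Fin (m+3) :=
  Fin.snoc (fun i : Fin m => i.castSucc.castSucc.castSucc) (Fin.last (m+2))

def rho4 {m : ℕ} : Fin (m+2) → Fin (m+4) :=
  Fin.snoc (Fin.snoc (fun i : Fin m => i.castSucc.castSucc.castSucc.castSucc)
    ((Fin.last (m+1)).castSucc.castSucc)) (Fin.last (m+3))

lemma comp_rho3 {m : ℕ} (w : Fin m → X) (a b c : X) :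
    (Fin.snoc (α := fun _ => X) (Fin.snoc (α := fun _ => X) (Fin.snoc (α := fun _ => X) w a) b) c) ∘ rho3
      = Fin.snoc (α := fun _ => X) w c := by
  funext i
  refine Fin.lastCases ?_ (fun j => ?_) i
  · simp [rho3]
  · simp [rho3]

lemma comp_rho4 {m : ℕ} (w : Fin m → X) (a x b y : X) :
    (Fin.snoc (α := fun _ => X) (Fin.snoc (α := fun _ => X) (Fin.snoc (α := fun _ => X)
      (Fin.snoc (α := fun _ => X) w a) x) b) y) ∘ rho4
      = Fin.snoc (α := fun _ => X) (Fin.snoc (α := fun _ => X) w x) y := by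
  funext i
  refine Fin.lastCases ?_ (fun j => ?_) i
  · simp [rho4]
  · refine Fin.lastCases ?_ (fun j' => ?_) j
    · simp [rho4]
    · simp [rho4]

/-- `∃ u, (var f)(var a) = u ∧ B[… , u]`. -/
def bAppEx {m : ℕ} (f a : Fin m) (B : SF (m+1)) : SF m :=
  .bexMem f (.bexMem (Fin.last m) (.bexMem (Fin.last (m+1)) (.and
    (sfKPair ((Fin.last m).castSucc.castSucc) a.castSucc.castSucc.castSucc (Fin.last (m+2)))
    (B.ren rho3))))

/-- `∀ u, (var f)(var a) = u → B[… , u]`. -/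
def bAppAll {m : ℕ} (f a : Fin m) (B : SF (m+1)) : SF m :=
  .ballMem f (.ballMem (Fin.last m) (.ballMem (Fin.last (m+1)) (sfImp
    (sfKPair ((Fin.last m).castSucc.castSucc) a.castSucc.castSucc.castSucc (Fin.last (m+2)))
    (B.ren rho3))))

lemma bAppEx_delta0 {m : ℕ} (f a : Fin m) {B : SF (m+1)} (hB : B.IsDelta0) :
    (bAppEx f a B).IsDelta0 := ⟨sfKPair_delta0 _ _ _, ren_delta0 _ _ hB⟩

lemma bAppAll_delta0 {m : ℕ} (f a : Fin m) {B : SF (m+1)} (hB : B.IsDelta0) :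
    (bAppAll f a B).IsDelta0 := ⟨sfKPair_delta0 _ _ _, ren_delta0 _ _ hB⟩

lemma bAppEx_delta0P {m : ℕ} (f a : Fin m) {B : SF (m+1)} (hB : B.IsDelta0P) :
    (bAppEx f a B).IsDelta0P := ⟨delta0_delta0P _ (sfKPair_delta0 _ _ _), ren_delta0P _ _ hB⟩

lemma bAppAll_delta0P {m : ℕ} (f a : Fin m) {B : SF (m+1)} (hB : B.IsDelta0P) :
    (bAppAll f a B).IsDelta0P := ⟨delta0_delta0P _ (sfKPair_delta0 _ _ _), ren_delta0P _ _ hB⟩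

lemma bAppEx_eval {E : X → X → Prop} (hext : ExtensionalityAx E) (hpair : PairAx E)
    {m : ℕ} (f a : Fin m) (B : SF (m+1)) (w : Fin m → X) :
    (bAppEx f a B).Eval E w ↔ ∃ u, FunApp E (w f) (w a) u ∧ B.Eval E (Fin.snoc w u) := by
  simp only [bAppEx, sfKPair, sfSing, sfUPair, SF.Eval, ren_eval, comp_rho3,
    Fin.snoc_last, Fin.snoc_castSucc]
  simp only [sing_char, upair_char, kpair_char hext hpair]
  constructor
  · rintro ⟨q, hq, wp, hwp, u, hu, hP, hB⟩
    exact ⟨u, ⟨q, hq, hP⟩, hB⟩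
  · rintro ⟨u, ⟨q, hq, hP⟩, hB⟩
    obtain ⟨wp, hwps⟩ := hpair (w a) u
    exact ⟨q, hq, wp, (hP wp).2 (Or.inr fun t => hwps t), u, (hwps u).2 (Or.inr rfl), hP, hB⟩

lemma bAppAll_eval {E : X → X → Prop} (hext : ExtensionalityAx E) (hpair : PairAx E)
    {m : ℕ} (f a : Fin m) (B : SF (m+1)) (w : Fin m → X) :
    (bAppAll f a B).Eval E w ↔ ∀ u, FunApp E (w f) (w a) u → B.Eval E (Fin.snoc w u) := by
  simp only [bAppAll, sfImp, sfKPair, sfSing, sfUPair, SF.Eval, ren_eval, comp_rho3,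
    Fin.snoc_last, Fin.snoc_castSucc]
  simp only [sing_char, upair_char, kpair_char hext hpair]
  simp only [← imp_iff_not_or]
  constructor
  · rintro h u ⟨q, hq, hP⟩
    obtain ⟨wp, hwps⟩ := hpair (w a) u
    exact h q hq wp ((hP wp).2 (Or.inr fun t => hwps t)) u ((hwps u).2 (Or.inr rfl)) hP
  · rintro h q hq wp hwp u hu hP
    exact h u ⟨q, hq, hP⟩

/-- `∃ x y, (var q) = ⟨x,y⟩ ∧ B[…, x, y]`. -/
def pairMatchEx {m : ℕ} (q : Fin m) (B : SF (m+2)) : SF m :=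
  .bexMem q (.bexMem (Fin.last m) (.bexMem q.castSucc.castSucc (.bexMem (Fin.last (m+2)) (.and
    (sfKPair q.castSucc.castSucc.castSucc.castSucc ((Fin.last (m+1)).castSucc.castSucc)
      (Fin.last (m+3)))
    (B.ren rho4)))))

/-- `∀ x y, (var q) = ⟨x,y⟩ → B[…, x, y]`. -/
def pairMatchAll {m : ℕ} (q : Fin m) (B : SF (m+2)) : SF m :=
  .ballMem q (.ballMem (Fin.last m) (.ballMem q.castSucc.castSucc (.ballMem (Fin.last (m+2)) (sfImp
    (sfKPair q.castSucc.castSucc.castSucc.castSucc ((Fin.last (m+1)).castSucc.castSucc)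
      (Fin.last (m+3)))
    (B.ren rho4)))))

lemma pairMatchEx_delta0 {m : ℕ} (q : Fin m) {B : SF (m+2)} (hB : B.IsDelta0) :
    (pairMatchEx q B).IsDelta0 := ⟨sfKPair_delta0 _ _ _, ren_delta0 _ _ hB⟩

lemma pairMatchAll_delta0 {m : ℕ} (q : Fin m) {B : SF (m+2)} (hB : B.IsDelta0) :
    (pairMatchAll q B).IsDelta0 := ⟨sfKPair_delta0 _ _ _, ren_delta0 _ _ hB⟩

lemma pairMatchEx_delta0P {m : ℕ} (q : Fin m) {B : SF (m+2)} (hB : B.IsDelta0P) :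
    (pairMatchEx q B).IsDelta0P := ⟨delta0_delta0P _ (sfKPair_delta0 _ _ _), ren_delta0P _ _ hB⟩

lemma pairMatchAll_delta0P {m : ℕ} (q : Fin m) {B : SF (m+2)} (hB : B.IsDelta0P) :
    (pairMatchAll q B).IsDelta0P := ⟨delta0_delta0P _ (sfKPair_delta0 _ _ _), ren_delta0P _ _ hB⟩

lemma pairMatchEx_eval {E : X → X → Prop} (hext : ExtensionalityAx E) (hpair : PairAx E)
    {m : ℕ} (q : Fin m) (B : SF (m+2)) (w : Fin m → X) :
    (pairMatchEx q B).Eval E w ↔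
      ∃ x y, IsPair E (w q) x y ∧ B.Eval E (Fin.snoc (Fin.snoc w x) y) := by
  simp only [pairMatchEx, sfKPair, sfSing, sfUPair, SF.Eval, ren_eval, comp_rho4,
    Fin.snoc_last, Fin.snoc_castSucc]
  simp only [sing_char, upair_char, kpair_char hext hpair]
  constructor
  · rintro ⟨w1, hw1, x, hx, w2, hw2, y, hy, hP, hB⟩
    exact ⟨x, y, hP, hB⟩
  · rintro ⟨x, y, hP, hB⟩
    obtain ⟨s, hs⟩ := hpair x x
    obtain ⟨t, ht⟩ := hpair x y
    refine ⟨s, (hP s).2 (Or.inl fun z => (hs z).trans or_self_iff), x, (hs x).2 (Or.inl rfl),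
      t, (hP t).2 (Or.inr fun z => ht z), y, (ht y).2 (Or.inr rfl), hP, hB⟩

lemma pairMatchAll_eval {E : X → X → Prop} (hext : ExtensionalityAx E) (hpair : PairAx E)
    {m : ℕ} (q : Fin m) (B : SF (m+2)) (w : Fin m → X) :
    (pairMatchAll q B).Eval E w ↔
      ∀ x y, IsPair E (w q) x y → B.Eval E (Fin.snoc (Fin.snoc w x) y) := by
  simp only [pairMatchAll, sfImp, sfKPair, sfSing, sfUPair, SF.Eval, ren_eval, comp_rho4,
    Fin.snoc_last, Fin.snoc_castSucc]
  simp only [sing_char, upair_char, kpair_char hext hpair]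
  simp only [← imp_iff_not_or]
  constructor
  · rintro h x y hP
    obtain ⟨s, hs⟩ := hpair x x
    obtain ⟨t, ht⟩ := hpair x y
    exact h s ((hP s).2 (Or.inl fun z => (hs z).trans or_self_iff)) x ((hs x).2 (Or.inl rfl))
      t ((hP t).2 (Or.inr fun z => ht z)) y ((ht y).2 (Or.inr rfl)) hP
  · rintro h w1 hw1 x hx w2 hw2 y hy hP
    exact h x y hP

end PartC2

section PartC3
variable {X : Type u}

def sfTrans {m : ℕ} (t : Fin m) : SF m :=
  .ballMem t (.ballMem (Fin.last m) (.mem (Fin.last (m+1)) t.castSucc.castSucc))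

lemma sfTrans_delta0 {m : ℕ} (t : Fin m) : (sfTrans t).IsDelta0 := by
  simp [sfTrans, SF.IsDelta0]

lemma sfTrans_eval (E : X → X → Prop) {m : ℕ} (t : Fin m) (w : Fin m → X) :
    (sfTrans t).Eval E w ↔ TransSet E (w t) := by
  simp only [sfTrans, SF.Eval, Fin.snoc_last, Fin.snoc_castSucc]
  rfl

def sfOrd {m : ℕ} (a : Fin m) : SF m :=
  .and (sfTrans a) (.ballMem a (sfTrans (Fin.last m)))

lemma sfOrd_delta0 {m : ℕ} (a : Fin m) : (sfOrd a).IsDelta0 := by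
  simp [sfOrd, sfTrans, SF.IsDelta0]

lemma sfOrd_eval (E : X → X → Prop) {m : ℕ} (a : Fin m) (w : Fin m → X) :
    (sfOrd a).Eval E w ↔ IsOrdinal E (w a) := by
  simp only [sfOrd, SF.Eval, sfTrans_eval, Fin.snoc_last, Fin.snoc_castSucc]
  rfl

def sfFun {m : ℕ} (f d : Fin m) : SF m :=
  .and (.ballMem f (pairMatchEx (Fin.last m)
      (.mem ((Fin.last (m+1)).castSucc) d.castSucc.castSucc.castSucc)))
    (.and
      (.ballMem f (pairMatchAll (Fin.last m)
        (bAppAll f.castSucc.castSucc.castSucc ((Fin.last (m+1)).castSucc)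
          (.eq (Fin.last (m+3)) ((Fin.last (m+2)).castSucc)))))
      (.ballMem d (bAppEx f.castSucc (Fin.last m) (.eq (Fin.last (m+1)) (Fin.last (m+1))))))

lemma sfFun_delta0 {m : ℕ} (f d : Fin m) : (sfFun f d).IsDelta0 :=
  ⟨pairMatchEx_delta0 _ trivial,
    pairMatchAll_delta0 _ (bAppAll_delta0 _ _ trivial),
    bAppEx_delta0 _ _ trivial⟩

lemma sfFun_eval {E : X → X → Prop} (hext : ExtensionalityAx E) (hpair : PairAx E)
    {m : ℕ} (f d : Fin m) (w : Fin m → X) :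
    (sfFun f d).Eval E w ↔ IsFuncOn E (w f) (w d) := by
  simp only [sfFun, eval_and, eval_ballMem, eval_eq, pairMatchEx_eval hext hpair,
    pairMatchAll_eval hext hpair, bAppEx_eval hext hpair, bAppAll_eval hext hpair,
    eval_mem, Fin.snoc_last, Fin.snoc_castSucc]
  constructor
  · rintro ⟨h1, h2, h3⟩
    refine ⟨fun q hq => h1 q hq, ?_, fun x hx => ?_⟩
    · rintro x y y' ⟨q, hq, hP⟩ happ'
      exact (h2 q hq x y hP y' happ').symm
    · obtain ⟨u, hu, _⟩ := h3 x hx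
      exact ⟨u, hu⟩
  · rintro ⟨h1, h2, h3⟩
    refine ⟨fun q hq => h1 q hq, ?_, fun x hx => ?_⟩
    · rintro q hq x y hP y' hy'
      exact h2 x y' y hy' ⟨q, hq, hP⟩
    · obtain ⟨u, hu⟩ := h3 x hx
      exact ⟨u, hu, trivial⟩

end PartC3

section PartC4
variable {X : Type u}

/-- The two directions of the defining clause of `IsRK`. -/
def RKcl (E : X → X → Prop) (α f : X) : Prop :=
  ∀ β, E β α → ∀ vβ, FunApp E f β vβ →
    ((∀ x, E x vβ → ∃ γ, E γ β ∧ ∃ vγ, FunApp E f γ vγ ∧ SubE E x vγ) ∧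
     (∀ γ, E γ β → ∀ vγ, FunApp E f γ vγ → ∀ x, SubE E x vγ → E x vβ))

/-- `D`-bounded version of `RKcl`. -/
def RKcl0 (E : X → X → Prop) (α f D : X) : Prop :=
  ∀ β, E β α → ∀ vβ, FunApp E f β vβ →
    ((∀ x, E x vβ → ∃ γ, E γ β ∧ ∃ vγ, FunApp E f γ vγ ∧ SubE E x vγ) ∧
     (∀ γ, E γ β → ∀ vγ, FunApp E f γ vγ → ∀ x, E x D → SubE E x vγ → E x vβ))

lemma isRK_iff (E : X → X → Prop) (α f : X) :
    IsRK E α f ↔ (IsOrdinal E α ∧ IsFuncOn E f α ∧ RKcl E α f) := by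
  constructor
  · rintro ⟨h1, h2, h3⟩
    refine ⟨h1, h2, fun β hβ vβ happ => ⟨fun x hx => (h3 β vβ hβ happ x).1 hx,
      fun γ hγ vγ happ' x hsub => (h3 β vβ hβ happ x).2 ⟨γ, hγ, vγ, happ', hsub⟩⟩⟩
  · rintro ⟨h1, h2, h3⟩
    refine ⟨h1, h2, fun β vβ hβ happ x => ⟨fun hx => (h3 β hβ vβ happ).1 x hx, ?_⟩⟩
    rintro ⟨γ, hγ, vγ, happ', hsub⟩
    exact (h3 β hβ vβ happ).2 γ hγ vγ happ' x hsub

def sfRKclP {m : ℕ} (α f : Fin m) : SF m :=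
  .ballMem α (bAppAll f.castSucc (Fin.last m) (.and
    (.ballMem (Fin.last (m+1)) (.bexMem ((Fin.last m).castSucc.castSucc)
      (bAppEx f.castSucc.castSucc.castSucc.castSucc (Fin.last (m+3))
        (sfSub ((Fin.last (m+2)).castSucc.castSucc) (Fin.last (m+4))))))
    (.ballMem ((Fin.last m).castSucc)
      (bAppAll f.castSucc.castSucc.castSucc (Fin.last (m+2))
        (.ballSub (Fin.last (m+3))
          (.mem (Fin.last (m+4)) ((Fin.last (m+1)).castSucc.castSucc.castSucc)))))))

def sfRKcl0 {m : ℕ} (α f D : Fin m) : SF m :=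
  .ballMem α (bAppAll f.castSucc (Fin.last m) (.and
    (.ballMem (Fin.last (m+1)) (.bexMem ((Fin.last m).castSucc.castSucc)
      (bAppEx f.castSucc.castSucc.castSucc.castSucc (Fin.last (m+3))
        (sfSub ((Fin.last (m+2)).castSucc.castSucc) (Fin.last (m+4))))))
    (.ballMem ((Fin.last m).castSucc)
      (bAppAll f.castSucc.castSucc.castSucc (Fin.last (m+2))
        (.ballMem D.castSucc.castSucc.castSucc.castSucc
          (sfImp (sfSub (Fin.last (m+4)) ((Fin.last (m+3)).castSucc))
            (.mem (Fin.last (m+4)) ((Fin.last (m+1)).castSucc.castSucc.castSucc))))))))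

lemma sfRKclP_delta0P {m : ℕ} (α f : Fin m) : (sfRKclP α f).IsDelta0P :=
  bAppAll_delta0P _ _ ⟨bAppEx_delta0P _ _ (delta0_delta0P _ (sfSub_delta0 _ _)),
    bAppAll_delta0P _ _ trivial⟩

lemma sfRKcl0_delta0 {m : ℕ} (α f D : Fin m) : (sfRKcl0 α f D).IsDelta0 :=
  bAppAll_delta0 _ _ ⟨bAppEx_delta0 _ _ (sfSub_delta0 _ _),
    bAppAll_delta0 _ _ ⟨sfSub_delta0 _ _, trivial⟩⟩

lemma sfRKclP_eval {E : X → X → Prop} (hext : ExtensionalityAx E) (hpair : PairAx E)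
    {m : ℕ} (α f : Fin m) (w : Fin m → X) :
    (sfRKclP α f).Eval E w ↔ RKcl E (w α) (w f) := by
  simp only [sfRKclP, eval_ballMem, eval_bexMem, eval_and, eval_ballSub, eval_mem,
    bAppAll_eval hext hpair, bAppEx_eval hext hpair, sfSub_eval,
    Fin.snoc_last, Fin.snoc_castSucc]
  rfl

lemma sfRKcl0_eval {E : X → X → Prop} (hext : ExtensionalityAx E) (hpair : PairAx E)
    {m : ℕ} (α f D : Fin m) (w : Fin m → X) :
    (sfRKcl0 α f D).Eval E w ↔ RKcl0 E (w α) (w f) (w D) := by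
  simp only [sfRKcl0, eval_ballMem, eval_bexMem, eval_and, eval_sfImp, eval_mem,
    bAppAll_eval hext hpair, bAppEx_eval hext hpair, sfSub_eval,
    Fin.snoc_last, Fin.snoc_castSucc]
  rfl

def sfIsRKP {m : ℕ} (α f : Fin m) : SF m :=
  .and (sfOrd α) (.and (sfFun f α) (sfRKclP α f))

def sfIsRK0 {m : ℕ} (α f D : Fin m) : SF m :=
  .and (sfOrd α) (.and (sfFun f α) (sfRKcl0 α f D))

lemma sfIsRKP_delta0P {m : ℕ} (α f : Fin m) : (sfIsRKP α f).IsDelta0P :=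
  ⟨delta0_delta0P _ (sfOrd_delta0 _), delta0_delta0P _ (sfFun_delta0 _ _), sfRKclP_delta0P _ _⟩

lemma sfIsRK0_delta0 {m : ℕ} (α f D : Fin m) : (sfIsRK0 α f D).IsDelta0 :=
  ⟨sfOrd_delta0 _, sfFun_delta0 _ _, sfRKcl0_delta0 _ _ _⟩

lemma sfIsRKP_eval {E : X → X → Prop} (hext : ExtensionalityAx E) (hpair : PairAx E)
    {m : ℕ} (α f : Fin m) (w : Fin m → X) :
    (sfIsRKP α f).Eval E w ↔ IsRK E (w α) (w f) := by
  rw [isRK_iff]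
  simp only [sfIsRKP, eval_and, sfOrd_eval, sfFun_eval hext hpair, sfRKclP_eval hext hpair]

lemma sfIsRK0_eval {E : X → X → Prop} (hext : ExtensionalityAx E) (hpair : PairAx E)
    {m : ℕ} (α f D : Fin m) (w : Fin m → X) :
    (sfIsRK0 α f D).Eval E w ↔
      (IsOrdinal E (w α) ∧ IsFuncOn E (w f) (w α) ∧ RKcl0 E (w α) (w f) (w D)) := by
  simp only [sfIsRK0, eval_and, sfOrd_eval, sfFun_eval hext hpair, sfRKcl0_eval hext hpair]

end PartC4

section PartD1
variable {X : Type u} {E : X → X → Prop}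

lemma ord_mem_ord (h : IsOrdinal E α) (hβ : E β α) : IsOrdinal E β :=
  ⟨h.2 β hβ, fun y hy => h.2 y (h.1 β hβ y hy)⟩

lemma succ_ext (hpair : PairAx E) (hunion : UnionAx E) (a : X) :
    ∃ S, ∀ z, E z S ↔ (E z a ∨ z = a) := by
  obtain ⟨s, hs⟩ := hpair a a
  obtain ⟨p, hp⟩ := hpair a s
  obtain ⟨S, hS⟩ := hunion p
  refine ⟨S, fun z => ?_⟩
  rw [hS]
  constructor
  · rintro ⟨y, hyp, hzy⟩
    rcases (hp y).1 hyp with rfl | rfl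
    · exact Or.inl hzy
    · exact Or.inr (((hs z).1 hzy).elim id id)
  · rintro (hz | rfl)
    · exact ⟨a, (hp a).2 (Or.inl rfl), hz⟩
    · exact ⟨s, (hp s).2 (Or.inr rfl), (hs z).2 (Or.inl rfl)⟩

/-- `∃ y ∈ var 0 (= T), ¬ cmp(x, y)` with `x` the separated variable. -/
def sfTri1 : SF 2 :=
  .bexMem ((Fin.last 0).castSucc) (.not (.or (.mem ((Fin.last 1).castSucc) (Fin.last 2))
    (.or (.eq ((Fin.last 1).castSucc) (Fin.last 2)) (.mem (Fin.last 2) ((Fin.last 1).castSucc)))))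

lemma sfTri1_delta0 : sfTri1.IsDelta0 := by simp [sfTri1, SF.IsDelta0]

lemma sfTri1_eval (p : Fin 1 → X) (x : X) :
    sfTri1.Eval E (Fin.snoc p x) ↔ ∃ y, E y (p (Fin.last 0)) ∧ ¬(E x y ∨ x = y ∨ E y x) := by
  simp only [sfTri1, eval_bexMem, eval_not, eval_or, eval_mem, eval_eq,
    Fin.snoc_last, Fin.snoc_castSucc]

/-- `¬ cmp(var 0 (= x*), y)` with `y` the separated variable. -/
def sfTri2 : SF 2 :=
  .not (.or (.mem ((Fin.last 0).castSucc) (Fin.last 1))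
    (.or (.eq ((Fin.last 0).castSucc) (Fin.last 1)) (.mem (Fin.last 1) ((Fin.last 0).castSucc))))

lemma sfTri2_delta0 : sfTri2.IsDelta0 := by simp [sfTri2, SF.IsDelta0]

lemma sfTri2_eval (p : Fin 1 → X) (y : X) :
    sfTri2.Eval E (Fin.snoc p y) ↔ ¬(E (p (Fin.last 0)) y ∨ p (Fin.last 0) = y ∨ E y (p (Fin.last 0))) := by
  simp only [sfTri2, eval_not, eval_or, eval_mem, eval_eq, Fin.snoc_last, Fin.snoc_castSucc]

lemma ord_tri (hext : ExtensionalityAx E) (hpair : PairAx E) (hunion : UnionAx E)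
    (hsep0 : SeparationScheme E Delta0C) (hfnd : SetFoundationAx E)
    {a b : X} (ha : IsOrdinal E a) (hb : IsOrdinal E b) :
    E a b ∨ a = b ∨ E b a := by
  by_contra hcon
  obtain ⟨S, hS⟩ := succ_ext hpair hunion a
  obtain ⟨T, hT⟩ := succ_ext hpair hunion b
  obtain ⟨Dset, hD⟩ := hsep0 1 sfTri1 sfTri1_delta0 (fun _ => T) S
  have hDiff : ∀ x, E x Dset ↔ (E x S ∧ ∃ y, E y T ∧ ¬(E x y ∨ x = y ∨ E y x)) := by
    intro x
    rw [hD x, sfTri1_eval]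
  have haD : E a Dset := (hDiff a).2 ⟨(hS a).2 (Or.inr rfl), b, (hT b).2 (Or.inr rfl), hcon⟩
  obtain ⟨xs, hxsD, hxsmin⟩ := hfnd Dset ⟨a, haD⟩
  have hxsS := ((hDiff xs).1 hxsD).1
  have hordx : IsOrdinal E xs := by
    rcases (hS xs).1 hxsS with h | rfl
    · exact ord_mem_ord ha h
    · exact ha
  have hmemS : ∀ z, E z xs → E z S := by
    intro z hz
    rcases (hS xs).1 hxsS with h | rfl
    · exact (hS z).2 (Or.inl (ha.1 xs h z hz))
    · exact (hS z).2 (Or.inl hz)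
  have hcmpz : ∀ z, E z xs → ∀ y, E y T → (E z y ∨ z = y ∨ E y z) := by
    intro z hz y hy
    by_contra hc
    exact hxsmin z hz ((hDiff z).2 ⟨hmemS z hz, y, hy, hc⟩)
  obtain ⟨y₀, hy₀T, hy₀n⟩ := ((hDiff xs).1 hxsD).2
  obtain ⟨D'set, hD'⟩ := hsep0 1 sfTri2 sfTri2_delta0 (fun _ => xs) T
  have hD'iff : ∀ y, E y D'set ↔ (E y T ∧ ¬(E xs y ∨ xs = y ∨ E y xs)) := by
    intro y
    rw [hD' y, sfTri2_eval]
  obtain ⟨ys, hysD, hysmin⟩ := hfnd D'set ⟨y₀, (hD'iff y₀).2 ⟨hy₀T, hy₀n⟩⟩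
  have hysT := ((hD'iff ys).1 hysD).1
  have hncmp := ((hD'iff ys).1 hysD).2
  have hordy : IsOrdinal E ys := by
    rcases (hT ys).1 hysT with h | rfl
    · exact ord_mem_ord hb h
    · exact hb
  have hmemT : ∀ z, E z ys → E z T := by
    intro z hz
    rcases (hT ys).1 hysT with h | rfl
    · exact (hT z).2 (Or.inl (hb.1 ys h z hz))
    · exact (hT z).2 (Or.inl hz)
  have hcmpy : ∀ z, E z ys → (E xs z ∨ xs = z ∨ E z xs) := by
    intro z hz
    by_contra hc
    exact hysmin z hz ((hD'iff z).2 ⟨hmemT z hz, hc⟩)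
  have hsub1 : ∀ z, E z xs → E z ys := by
    intro z hz
    rcases hcmpz z hz ys hysT with h | rfl | h
    · exact h
    · exact absurd (Or.inr (Or.inr hz)) hncmp
    · exact absurd (Or.inr (Or.inr (hordx.1 z hz ys h))) hncmp
  have hsub2 : ∀ z, E z ys → E z xs := by
    intro z hz
    rcases hcmpy z hz with h | rfl | h
    · exact absurd (Or.inl (hordy.1 z hz xs h)) hncmp
    · exact absurd (Or.inl hz) hncmp
    · exact h
  exact hncmp (Or.inr (Or.inl (hext xs ys fun z => ⟨hsub1 z, hsub2 z⟩)))

end PartD1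

section PartD2
variable {X : Type u} {E : X → X → Prop}

/-- `β ∈ α' ∧ ∃ u u', f(β) = u ∧ f'(β) = u' ∧ u ≠ u'`; variables `0 = α'`,
`1 = f`, `2 = f'`, `3 = β` (the separated variable). -/
def sfCoh : SF 4 :=
  .and (.mem (Fin.last 3) ((Fin.last 0).castSucc.castSucc.castSucc))
    (bAppEx ((Fin.last 1).castSucc.castSucc) (Fin.last 3)
      (bAppEx ((Fin.last 2).castSucc.castSucc) ((Fin.last 3).castSucc)
        (.not (.eq ((Fin.last 4).castSucc) (Fin.last 5)))))

lemma sfCoh_delta0 : sfCoh.IsDelta0 :=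
  ⟨trivial, bAppEx_delta0 _ _ (bAppEx_delta0 _ _ trivial)⟩

lemma sfCoh_eval (hext : ExtensionalityAx E) (hpair : PairAx E) (p : Fin 3 → X) (β : X) :
    sfCoh.Eval E (Fin.snoc p β) ↔
      (E β (p 0) ∧ ∃ u, FunApp E (p 1) β u ∧ ∃ u', FunApp E (p 2) β u' ∧ u ≠ u') := by
  simp only [sfCoh, eval_and, eval_mem, eval_not, eval_eq, bAppEx_eval hext hpair,
    Fin.snoc_last, Fin.snoc_castSucc]
  rfl

lemma rk_coherence (hext : ExtensionalityAx E) (hpair : PairAx E)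
    (hsep0 : SeparationScheme E Delta0C) (hfnd : SetFoundationAx E)
    {α f α' f' : X} (hf : IsRK E α f) (hf' : IsRK E α' f') :
    ∀ β, E β α → E β α' → ∀ u u', FunApp E f β u → FunApp E f' β u' → u = u' := by
  obtain ⟨ho, hfn, hcl⟩ := (isRK_iff E α f).1 hf
  obtain ⟨ho', hfn', hcl'⟩ := (isRK_iff E α' f').1 hf'
  obtain ⟨Dset, hD⟩ := hsep0 3 sfCoh sfCoh_delta0 ![α', f, f'] α
  have hDiff : ∀ x, E x Dset ↔ (E x α ∧ E x α' ∧
      ∃ u, FunApp E f x u ∧ ∃ u', FunApp E f' x u' ∧ u ≠ u') := by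
    intro x
    rw [hD x, sfCoh_eval hext hpair]
    simp [Matrix.cons_val_zero, Matrix.cons_val_one]
  by_contra hcon
  push_neg at hcon
  obtain ⟨β₀, hβα, hβα', u₀, u₀', hu, hu', hne⟩ := hcon
  have hβD : E β₀ Dset := (hDiff β₀).2 ⟨hβα, hβα', u₀, hu, u₀', hu', hne⟩
  obtain ⟨βm, hβmD, hβmmin⟩ := hfnd Dset ⟨β₀, hβD⟩
  obtain ⟨hβmα, hβmα', um, hum, um', hum', hnem⟩ := (hDiff βm).1 hβmD
  have hagree : ∀ γ, E γ βm → ∀ v v', FunApp E f γ v → FunApp E f' γ v' → v = v' := by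
    intro γ hγ v v' hv hv'
    by_contra hne'
    exact hβmmin γ hγ ((hDiff γ).2 ⟨ho.1 βm hβmα γ hγ, ho'.1 βm hβmα' γ hγ, v, hv, v', hv', hne'⟩)
  apply hnem
  apply hext
  intro x
  constructor
  · intro hx
    obtain ⟨γ, hγ, vγ, hvγ, hsubx⟩ := (hcl βm hβmα um hum).1 x hx
    obtain ⟨vγ', hvγ'⟩ := hfn'.2.2 γ (ho'.1 βm hβmα' γ hγ)
    have : vγ = vγ' := hagree γ hγ vγ vγ' hvγ hvγ'
    exact (hcl' βm hβmα' um' hum').2 γ hγ vγ' hvγ' x (this ▸ hsubx)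
  · intro hx
    obtain ⟨γ, hγ, vγ', hvγ', hsubx⟩ := (hcl' βm hβmα' um' hum').1 x hx
    obtain ⟨vγ, hvγ⟩ := hfn.2.2 γ (ho.1 βm hβmα γ hγ)
    have : vγ = vγ' := hagree γ hγ vγ vγ' hvγ hvγ'
    exact (hcl βm hβmα um hum).2 γ hγ vγ hvγ x (this ▸ hsubx)

lemma rk_mono {α f : X} (hf : IsRK E α f) :
    ∀ β γ, E β α → E γ β → ∀ u w', FunApp E f γ u → FunApp E f β w' →
      ∀ x, E x u → E x w' := by
  obtain ⟨ho, hfn, hcl⟩ := (isRK_iff E α f).1 hf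
  intro β γ hβ hγ u w' hu hw' x hx
  have hγα : E γ α := ho.1 β hβ γ hγ
  obtain ⟨δ, hδ, vδ, hvδ, hsub⟩ := (hcl γ hγα u hu).1 x hx
  have hδβ : E δ β := (ord_mem_ord ho hβ).1 γ hγ δ hδ
  exact (hcl β hβ w' hw').2 δ hδβ vδ hvδ x hsub

/-- `∃ u, f(β) = u ∧ z ∈ u`; variables `0 = f`, `1 = z`, `2 = β` (separated). -/
def sfInStage : SF 3 :=
  bAppEx ((Fin.last 0).castSucc.castSucc) (Fin.last 2)
    (.mem ((Fin.last 1).castSucc.castSucc) (Fin.last 3))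

lemma sfInStage_delta0 : sfInStage.IsDelta0 := bAppEx_delta0 _ _ trivial

lemma sfInStage_eval (hext : ExtensionalityAx E) (hpair : PairAx E) (p : Fin 2 → X) (β : X) :
    sfInStage.Eval E (Fin.snoc p β) ↔ ∃ u, FunApp E (p 0) β u ∧ E (p 1) u := by
  simp only [sfInStage, bAppEx_eval hext hpair, eval_mem, Fin.snoc_last, Fin.snoc_castSucc]
  rfl

/-- Any element lying in some stage lies in a least stage. -/
lemma least_stage (hext : ExtensionalityAx E) (hpair : PairAx E)
    (hsep0 : SeparationScheme E Delta0C) (hfnd : SetFoundationAx E)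
    {z α f β u : X} (hf : IsRK E α f) (hβ : E β α) (hu : FunApp E f β u) (hz : E z u) :
    ∃ βm um, E βm α ∧ FunApp E f βm um ∧ E z um ∧
      ∀ γ, E γ βm → ∀ w', FunApp E f γ w' → ¬ E z w' := by
  obtain ⟨Dset, hD⟩ := hsep0 2 sfInStage sfInStage_delta0 ![f, z] α
  have hDiff : ∀ x, E x Dset ↔ (E x α ∧ ∃ u', FunApp E f x u' ∧ E z u') := by
    intro x
    rw [hD x, sfInStage_eval hext hpair]
    simp [Matrix.cons_val_zero, Matrix.cons_val_one]
  have hβD : E β Dset := (hDiff β).2 ⟨hβ, u, hu, hz⟩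
  obtain ⟨βm, hβmD, hβmmin⟩ := hfnd Dset ⟨β, hβD⟩
  obtain ⟨hβmα, um, hum, hzum⟩ := (hDiff βm).1 hβmD
  refine ⟨βm, um, hβmα, hum, hzum, fun γ hγ w' hw' hzw' => ?_⟩
  exact hβmmin γ hγ ((hDiff γ).2 ⟨hf.1.1 βm hβmα γ hγ, w', hw', hzw'⟩)

/-- The least stage containing `z` is contained in every stage containing `z`. -/
lemma least_stage_sub (hext : ExtensionalityAx E) (hpair : PairAx E)
    (hunion : UnionAx E) (hsep0 : SeparationScheme E Delta0C) (hfnd : SetFoundationAx E)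
    {z α f βm um : X} (hf : IsRK E α f) (hβm : E βm α) (hum : FunApp E f βm um)
    (hmin : ∀ γ, E γ βm → ∀ w', FunApp E f γ w' → ¬ E z w')
    {α' g β' v : X} (hg : IsRK E α' g) (hβ' : E β' α') (hv : FunApp E g β' v) (hzv : E z v) :
    ∀ x, E x um → E x v := by
  intro x hx
  have hordβm : IsOrdinal E βm := ord_mem_ord hf.1 hβm
  have hordβ' : IsOrdinal E β' := ord_mem_ord hg.1 hβ'
  rcases ord_tri hext hpair hunion hsep0 hfnd hordβ' hordβm with h | heq | h
  · -- β' ∈ βm : contradicts minimality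
    exfalso
    have hβ'α : E β' α := hf.1.1 βm hβm β' h
    obtain ⟨v₂, hv₂⟩ := hf.2.1.2.2 β' hβ'α
    have : v₂ = v := rk_coherence hext hpair hsep0 hfnd hf hg β' hβ'α hβ' v₂ v hv₂ hv
    exact hmin β' h v₂ hv₂ (this ▸ hzv)
  · -- β' = βm
    have hβmα' : E βm α' := heq ▸ hβ'
    have hv' : FunApp E g βm v := heq ▸ hv
    have : um = v := rk_coherence hext hpair hsep0 hfnd hf hg βm hβm hβmα' um v hum hv'
    exact this ▸ hx
  · -- βm ∈ β'
    have hβmα' : E βm α' := hg.1.1 β' hβ' βm h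
    obtain ⟨v₂, hv₂⟩ := hg.2.1.2.2 βm hβmα'
    have hv₂um : v₂ = um := rk_coherence hext hpair hsep0 hfnd hg hf βm hβmα' hβm v₂ um hv₂ hum
    exact rk_mono hg β' βm hβ' h v₂ v hv₂ hv x (hv₂um ▸ hx)

end PartD2

section PartE1
variable {X : Type u} {E : X → X → Prop}

/-- Semantics of the collection formula: `y = ⟨α,g⟩` codes a hierarchy with a
least stage containing `z`. -/
def CollWitness (E : X → X → Prop) (z y : X) : Prop :=
  ∃ α g, IsPair E y α g ∧ IsRK E α g ∧ ∃ β, E β α ∧ ∃ u, FunApp E g β u ∧ E z u ∧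
    ∀ γ, E γ β → ∀ w', FunApp E g γ w' → ¬ E z w'

/-- The collection formula, `Δ₀^𝒫`; variables `0 = z`, `1 = y`. -/
def sfColl : SF 2 :=
  pairMatchEx (Fin.last 1)
    (.and (sfIsRKP ((Fin.last 2).castSucc) (Fin.last 3))
      (.bexMem ((Fin.last 2).castSucc)
        (bAppEx ((Fin.last 3).castSucc) (Fin.last 4)
          (.and (.mem ((Fin.last 0).castSucc.castSucc.castSucc.castSucc.castSucc) (Fin.last 5))
            (.ballMem ((Fin.last 4).castSucc)
              (bAppAll ((Fin.last 3).castSucc.castSucc.castSucc) (Fin.last 6)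
                (.not (.mem ((Fin.last 0).castSucc.castSucc.castSucc.castSucc.castSucc.castSucc.castSucc)
                  (Fin.last 7)))))))))

lemma sfColl_delta0P : sfColl.IsDelta0P :=
  pairMatchEx_delta0P _ ⟨sfIsRKP_delta0P _ _,
    bAppEx_delta0P _ _ ⟨trivial, bAppAll_delta0P _ _ trivial⟩⟩

lemma sfColl_eval (hext : ExtensionalityAx E) (hpair : PairAx E) (p : Fin 0 → X) (z y : X) :
    sfColl.Eval E (Fin.snoc (Fin.snoc p z) y) ↔ CollWitness E z y := by
  simp only [sfColl, pairMatchEx_eval hext hpair, eval_and, eval_bexMem, eval_ballMem,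
    eval_not, eval_mem, sfIsRKP_eval hext hpair, bAppEx_eval hext hpair,
    bAppAll_eval hext hpair, Fin.snoc_last, Fin.snoc_castSucc]
  rfl

/-- The separation formula for `U`, `Δ₀`; variables `0 = c`, `1 = B`, `2 = D`,
`3 = x` (separated). -/
def sfU : SF 4 :=
  .bexMem ((Fin.last 1).castSucc.castSucc)
    (.bexMem ((Fin.last 0).castSucc.castSucc.castSucc.castSucc)
      (pairMatchEx ((Fin.last 4).castSucc)
        (.and (sfIsRK0 ((Fin.last 6).castSucc) (Fin.last 7)
            ((Fin.last 2).castSucc.castSucc.castSucc.castSucc.castSucc))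
          (.bexMem ((Fin.last 6).castSucc)
            (bAppEx ((Fin.last 7).castSucc) (Fin.last 8)
              (.and (.mem ((Fin.last 5).castSucc.castSucc.castSucc.castSucc) (Fin.last 9))
                (.and (.mem ((Fin.last 3).castSucc.castSucc.castSucc.castSucc.castSucc.castSucc) (Fin.last 9))
                  (.ballMem ((Fin.last 8).castSucc)
                    (bAppAll ((Fin.last 7).castSucc.castSucc.castSucc) (Fin.last 10)
                      (.not (.mem ((Fin.last 5).castSucc.castSucc.castSucc.castSucc.castSucc.castSucc)
                        (Fin.last 11))))))))))))

lemma sfU_delta0 : sfU.IsDelta0 :=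
  pairMatchEx_delta0 _ ⟨sfIsRK0_delta0 _ _ _,
    bAppEx_delta0 _ _ ⟨trivial, trivial, bAppAll_delta0 _ _ trivial⟩⟩

lemma sfU_eval (hext : ExtensionalityAx E) (hpair : PairAx E) (p : Fin 3 → X) (x : X) :
    sfU.Eval E (Fin.snoc p x) ↔
      ∃ y, E y (p 1) ∧ ∃ z, E z (p 0) ∧ ∃ α g, IsPair E y α g ∧
        (IsOrdinal E α ∧ IsFuncOn E g α ∧ RKcl0 E α g (p 2)) ∧
        ∃ β, E β α ∧ ∃ u, FunApp E g β u ∧ E z u ∧ E x u ∧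
          ∀ γ, E γ β → ∀ w', FunApp E g γ w' → ¬ E z w' := by
  simp only [sfU, pairMatchEx_eval hext hpair, eval_and, eval_bexMem, eval_ballMem,
    eval_not, eval_mem, sfIsRK0_eval hext hpair, bAppEx_eval hext hpair,
    bAppAll_eval hext hpair, Fin.snoc_last, Fin.snoc_castSucc]
  rfl

end PartE1

section PartE2
variable {X : Type u} {E : X → X → Prop}

lemma mkIsPair (hext : ExtensionalityAx E) (hpair : PairAx E) (a b : X) :
    ∃ p, IsPair E p a b := by
  obtain ⟨s, hs⟩ := hpair a a
  obtain ⟨t, ht⟩ := hpair a b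
  obtain ⟨P, hP⟩ := hpair s t
  refine ⟨P, fun z => ⟨?_, ?_⟩⟩
  · intro hz
    rcases (hP z).1 hz with rfl | rfl
    · exact Or.inl fun w => (hs w).trans or_self_iff
    · exact Or.inr fun w => ht w
  · rintro (hz | hz)
    · have : z = s := hext z s fun w => (hz w).trans ((hs w).trans or_self_iff).symm
      exact this ▸ (hP s).2 (Or.inl rfl)
    · have : z = t := hext z t fun w => (hz w).trans (ht w).symm
      exact this ▸ (hP t).2 (Or.inr rfl)

lemma pair_comp_mem (hpair : PairAx E) {t y α g : X} (ht : TransSet E t) (hyt : E y t)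
    (hP : IsPair E y α g) : E α t ∧ E g t := by
  obtain ⟨s, hs⟩ := hpair α g
  have hsy : E s y := (hP s).2 (Or.inr fun w => hs w)
  have hst : E s t := ht y hyt s hsy
  exact ⟨ht s hst α ((hs α).2 (Or.inl rfl)), ht s hst g ((hs g).2 (Or.inr rfl))⟩

lemma funApp_mem_t (hpair : PairAx E) {t g β u : X} (ht : TransSet E t) (hgt : E g t)
    (happ : FunApp E g β u) : E u t := by
  obtain ⟨q, hq, hP⟩ := happ
  obtain ⟨s, hs⟩ := hpair β u
  have hsq : E s q := (hP s).2 (Or.inr fun w => hs w)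
  have hqt : E q t := ht g hgt q hq
  have hst : E s t := ht q hqt s hsq
  exact ht s hst u ((hs u).2 (Or.inr rfl))

lemma rkcl_to_rkcl0 {α g D : X} (h : RKcl E α g) : RKcl0 E α g D :=
  fun β hβ vβ happ => ⟨(h β hβ vβ happ).1,
    fun γ hγ vγ happ' x _ hsub => (h β hβ vβ happ).2 γ hγ vγ happ' x hsub⟩

lemma rk0_upgrade (hpair : PairAx E) {t D α g : X} (ht : TransSet E t)
    (hDD : ∀ z, E z D ↔ SubE E z t) (hgt : E g t)
    (ho : IsOrdinal E α) (hfn : IsFuncOn E g α) (hcl0 : RKcl0 E α g D) : IsRK E α g := by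
  refine (isRK_iff E α g).2 ⟨ho, hfn, fun β hβ vβ happ => ⟨(hcl0 β hβ vβ happ).1, ?_⟩⟩
  intro γ hγ vγ happγ x hsub
  have hvγt : E vγ t := funApp_mem_t hpair ht hgt happγ
  have hxD : E x D := (hDD x).2 fun z hz => ht vγ hvγt z (hsub z hz)
  exact (hcl0 β hβ vβ happ).2 γ hγ vγ happγ x hxD hsub

lemma stage_sep {A : Set X} (hrk2 : ∀ x y, y ∈ A → RankLe E x y → x ∈ A)
    {ya xa : X} (hy : ya ∈ A) (hx : xa ∉ A) :
    ∃ α f β u, IsRK E α f ∧ E β α ∧ FunApp E f β u ∧ E ya u ∧ ¬ E xa u := by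
  by_contra hcon
  push_neg at hcon
  exact hx (hrk2 xa ya hy fun α f β v h1 h2 h3 h4 => hcon α f β v h1 h2 h3 h4)

end PartE2

section PartE3
variable {X : Type u} {E : X → X → Prop} {A : Set X}

lemma coded_A (hN : ModelKPP E) (hMmod : ModelKPP (restrict E A))
    (hrk : RankExtSet E A) (hblunt : BluntSet E A) :
    ∃ v, ∀ x, E x v ↔ x ∈ A := by
  obtain ⟨⟨⟨hext, hemp, hpair, hunion, hsdiff, htco, hinf, hsep0, hfnd⟩, hpow⟩, hcoll, hfndP⟩ := hN
  obtain ⟨⟨hend, hpowext⟩, hrk2⟩ := hrk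
  obtain ⟨hAne, hntop⟩ := hblunt
  -- get the "top" witness c ∉ A with all its elements in A
  obtain ⟨c, hcA, hcnA⟩ : ∃ c, (∀ x, E x c → x ∈ A) ∧ c ∉ A := by
    rcases not_and_or.1 hntop with h | h
    · exact absurd hAne (not_not.2 (not_not.1 h))
    · push_neg at h
      obtain ⟨c, h1, h2⟩ := h
      exact ⟨c, h1, h2⟩
  -- collect least-stage codes for the elements of c
  obtain ⟨Bc, hBc⟩ := hcoll 0 sfColl sfColl_delta0P Fin.elim0 c (by
    intro z hz
    obtain ⟨α, f, β, u, hf, hβ, hu, hzu, _⟩ := stage_sep hrk2 (hcA z hz) hcnA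
    obtain ⟨βm, um, hβm, hum, hzum, hmin⟩ := least_stage hext hpair hsep0 hfnd hf hβ hu hzu
    obtain ⟨y, hPy⟩ := mkIsPair hext hpair α f
    exact ⟨y, (sfColl_eval hext hpair _ z y).2 ⟨α, f, hPy, hf, βm, hβm, um, hum, hzum, hmin⟩⟩)
  have hBc' : ∀ z, E z c → ∃ y, E y Bc ∧ CollWitness E z y := by
    intro z hz
    obtain ⟨y, hy, hw⟩ := hBc z hz
    exact ⟨y, hy, (sfColl_eval hext hpair _ z y).1 hw⟩
  obtain ⟨t, htr, hBt⟩ := htco Bc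
  obtain ⟨D, hD⟩ := hpow t
  obtain ⟨U, hU⟩ := hsep0 3 sfU sfU_delta0 ![c, Bc, D] t
  have hUiff : ∀ x, E x U ↔ (E x t ∧ ∃ y, E y Bc ∧ ∃ z, E z c ∧ ∃ α g, IsPair E y α g ∧
      (IsOrdinal E α ∧ IsFuncOn E g α ∧ RKcl0 E α g D) ∧
      ∃ β, E β α ∧ ∃ u, FunApp E g β u ∧ E z u ∧ E x u ∧
        ∀ γ, E γ β → ∀ w', FunApp E g γ w' → ¬ E z w') := by
    intro x
    rw [hU x, sfU_eval hext hpair]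
    simp [Matrix.cons_val_zero, Matrix.cons_val_one, Matrix.head_cons]
  refine ⟨U, fun x => ⟨?_, ?_⟩⟩
  · -- every element of U is in A
    intro hxU
    obtain ⟨hxt, y, hyB, z, hz, α, g, hPy, ⟨ho, hfn, hcl0⟩, β, hβ, u, hu, hzu, hxu, hmin⟩ :=
      (hUiff x).1 hxU
    have hyt : E y t := hBt y hyB
    have hgt : E g t := (pair_comp_mem hpair htr hyt hPy).2
    have hg : IsRK E α g := rk0_upgrade hpair htr hD hgt ho hfn hcl0
    have hrle : RankLe E x z := by
      intro α' f' β' v h1 h2 h3 h4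
      exact least_stage_sub hext hpair hunion hsep0 hfnd hg hβ hu hmin h1 h2 h3 h4 x hxu
    exact hrk2 x z (hcA z hz) hrle
  · -- every element of A is in U
    intro hxA
    obtain ⟨α₁, h, βh, u₁, hh, hβh, hu₁, hxu₁, hcu₁⟩ := stage_sep hrk2 hxA hcnA
    obtain ⟨βa, ua, hβa, hua, hxua, hmina⟩ := least_stage hext hpair hsep0 hfnd hh hβh hu₁ hxu₁
    have hclh := ((isRK_iff E α₁ h).1 hh).2.2
    obtain ⟨γa, hγa, vγ, hvγ, hsubxvγ⟩ := (hclh βa hβa ua hua).1 x hxua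
    have hγaα₁ : E γa α₁ := hh.1.1 βa hβa γa hγa
    by_cases hall : ∀ z, E z c → E z vγ
    · -- then c ∈ ua ⊆ u₁, contradicting c ∉ u₁
      exfalso
      have hcua : E c ua := (hclh βa hβa ua hua).2 γa hγa vγ hvγ c hall
      exact hcu₁ (least_stage_sub hext hpair hunion hsep0 hfnd hh hβa hua hmina
        hh hβh hu₁ hxu₁ c hcua)
    · push_neg at hall
      obtain ⟨z, hz, hznv⟩ := hall
      obtain ⟨y, hyB, αz, gz, hPyz, hgz, βz, hβz, uz, huz, hzuz, hminz⟩ := hBc' z hz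
      have hordβz : IsOrdinal E βz := ord_mem_ord hgz.1 hβz
      have hordγa : IsOrdinal E γa := ord_mem_ord hh.1 hγaα₁
      rcases ord_tri hext hpair hunion hsep0 hfnd hordβz hordγa with hlt | heq | hgt'
      · -- βz ∈ γa : z ∈ vγ, contradiction
        exfalso
        apply hznv
        have hβzα₁ : E βz α₁ := hh.1.1 γa hγaα₁ βz hlt
        obtain ⟨wz, hwz⟩ := hh.2.1.2.2 βz hβzα₁
        have huzwz : uz = wz :=
          rk_coherence hext hpair hsep0 hfnd hgz hh βz hβz hβzα₁ uz wz huz hwz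
        exact rk_mono hh γa βz hγaα₁ hlt wz vγ hwz hvγ z (huzwz ▸ hzuz)
      · -- βz = γa : z ∈ vγ, contradiction
        exfalso
        apply hznv
        obtain ⟨wz, hwz⟩ := hh.2.1.2.2 βz (heq ▸ hγaα₁)
        have huzwz : uz = wz :=
          rk_coherence hext hpair hsep0 hfnd hgz hh βz hβz (heq ▸ hγaα₁) uz wz huz hwz
        have hwzvγ : wz = vγ := by
          have := hh.2.1.2.1 βz wz vγ hwz (heq ▸ hvγ)
          exact this
        exact hwzvγ ▸ huzwz ▸ hzuz
      · -- γa ∈ βz : x ∈ uz and so x ∈ U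
        have hγaαz : E γa αz := hgz.1.1 βz hβz γa hgt'
        obtain ⟨vγ', hvγ'⟩ := hgz.2.1.2.2 γa hγaαz
        have hvv : vγ' = vγ :=
          rk_coherence hext hpair hsep0 hfnd hgz hh γa hγaαz hγaα₁ vγ' vγ hvγ' hvγ
        have hxuz : E x uz := by
          have hclgz := ((isRK_iff E αz gz).1 hgz).2.2
          exact (hclgz βz hβz uz huz).2 γa hgt' vγ' hvγ' x (hvv ▸ hsubxvγ)
        have hyt : E y t := hBt y hyB
        have hgzt : E gz t := (pair_comp_mem hpair htr hyt hPyz).2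
        have huzt : E uz t := funApp_mem_t hpair htr hgzt huz
        have hxt : E x t := htr uz huzt x hxuz
        exact (hUiff x).2 ⟨hxt, y, hyB, z, hz, αz, gz, hPyz,
          ⟨hgz.1, hgz.2.1, rkcl_to_rkcl0 (((isRK_iff E αz gz).1 hgz).2.2)⟩,
          βz, hβz, uz, huz, hzuz, hxuz, hminz⟩

end PartE3

section PartF
variable {X : Type u} {E : X → X → Prop} {A : Set X}

lemma insertNth_last' {n : ℕ} (v : X) (p : Fin n → X) :
    Fin.insertNth (α := fun _ => X) (Fin.last n) v p = Fin.snoc (α := fun _ => X) p v := by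
  funext i
  refine Fin.lastCases ?_ (fun j => ?_) i
  · rw [Fin.insertNth_apply_same, Fin.snoc_last]
  · rw [Fin.snoc_castSucc, ← Fin.succAbove_last_apply, Fin.insertNth_apply_succAbove]

lemma coded_full_sep (hN : ModelKPP E)
    (hend : ∀ x y, y ∈ A → E x y → x ∈ A)
    (hpow : ∀ x y, y ∈ A → SubE E x y → x ∈ A)
    (v : X) (hv : ∀ x, E x v ↔ x ∈ A) :
    SeparationScheme (restrict E A) FullC := by
  intro n φ _ p w
  obtain ⟨y, hy⟩ := hN.1.1.2.2.2.2.2.2.2.1 (n+1) (relv φ ((Fin.last n).castSucc))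
      (relv_delta0 _ _) (Fin.snoc (fun i => ((p i : X))) v) (w : X)
  have hyA : y ∈ A := hpow y w w.2 (fun z hz => ((hy z).1 hz).1)
  refine ⟨⟨y, hyA⟩, fun x => ?_⟩
  have key : SF.Eval E (relv φ ((Fin.last n).castSucc))
      (Fin.snoc (Fin.snoc (fun i => ((p i : X))) v) (x : X)) ↔
      SF.Eval (restrict E A) φ (Fin.snoc p x) := by
    rw [show Fin.snoc (α := fun _ => X) (fun i => ((p i : X))) v =
        Fin.insertNth (α := fun _ => X) (Fin.last n) v (fun i => ((p i : X))) from
        (insertNth_last' _ _).symm, snoc_insertNth]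
    have hc : (Fin.snoc (α := fun _ => X) (fun i => ((p i : X))) (x : X)) =
        (fun i => ((Fin.snoc (α := fun _ => A) p x i : X))) :=
      (Fin.comp_snoc Subtype.val p x).symm
    rw [hc]
    exact relv_eval hv hend φ _ (Fin.snoc p x)
  constructor
  · intro hxy
    have := (hy (x : X)).1 hxy
    exact ⟨this.1, key.1 this.2⟩
  · intro ⟨hxw, hφ⟩
    exact (hy (x : X)).2 ⟨hxw, key.2 hφ⟩

end PartF

/-- if `M` and `N` are models of `KP^𝒫` and `N` is a blunt rank
extension of `M`, then `M` satisfies full Separation. -/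
theorem full_separation_of_blunt_rank_ext (X : Type u) (E : X → X → Prop)
    (A : Set X) (hN : ModelKPP E) (hMmod : ModelKPP (restrict E A))
    (hrk : RankExtSet E A) (hblunt : BluntSet E A) :
    SeparationScheme (restrict E A) FullC := by
  obtain ⟨v, hv⟩ : ∃ v, ∀ x, E x v ↔ x ∈ A := coded_A hN hMmod hrk hblunt
  exact coded_full_sep hN hrk.1.1 hrk.1.2 v hv
end
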